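/- arXiv:1705.06393 — 7 statements merged into one kernel-verified Lean document; each statement's English description precedes it below -/
import Mathlib

section
/- For every integral binary cubic form f = (a,b,c,d) ∈ ℤ⁴, the multiplication table ωθ = −ad, ω² = −ac + bω − aθ, θ² = −bd + dω − cθ defines a commutative, associative, unital ring structure on the free ℤ-module with basis ⟨1, ω, θ⟩, and the discriminant of this ring (the determinant of the matrix of traces (Tr(eᵢeⱼ)) with respect to the basis (1, ω, θ)) equals the discriminant D(f) = b²c² + 18abcd − 4ac³ − 4b³d − 27a²d² of the form f. -/
private def cubeMul (a b c d : ℤ) : (Fin 3 → ℤ) →ₗ[ℤ] (Fin 3 → ℤ) →ₗ[ℤ] (Fin 3 → ℤ) :=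
  LinearMap.mk₂ ℤ (fun x y =>
    ![x 0 * y 0 - a * c * (x 1 * y 1) - a * d * (x 1 * y 2 + x 2 * y 1) - b * d * (x 2 * y 2),
      x 0 * y 1 + x 1 * y 0 + b * (x 1 * y 1) + d * (x 2 * y 2),
      x 0 * y 2 + x 2 * y 0 - a * (x 1 * y 1) - c * (x 2 * y 2)])
    (by intro x x' y; funext k; fin_cases k <;> simp <;> ring)
    (by intro r x y; funext k; fin_cases k <;> simp <;> ring)
    (by intro x y y'; funext k; fin_cases k <;> simp <;> ring)
    (by intro r x y; funext k; fin_cases k <;> simp <;> ring)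

private lemma fin3_zero (h : 0 < 3) : (⟨0, h⟩ : Fin 3) = 0 := rfl
private lemma fin3_one (h : 1 < 3) : (⟨1, h⟩ : Fin 3) = 1 := rfl
private lemma fin3_two (h : 2 < 3) : (⟨2, h⟩ : Fin 3) = 2 := rfl

private lemma cubeMul_apply0 (a b c d : ℤ) (x y : Fin 3 → ℤ) :
    cubeMul a b c d x y 0 =
      x 0 * y 0 - a * c * (x 1 * y 1) - a * d * (x 1 * y 2 + x 2 * y 1) - b * d * (x 2 * y 2) :=
  rfl

private lemma cubeMul_apply1 (a b c d : ℤ) (x y : Fin 3 → ℤ) :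
    cubeMul a b c d x y 1 = x 0 * y 1 + x 1 * y 0 + b * (x 1 * y 1) + d * (x 2 * y 2) := rfl

private lemma cubeMul_apply2 (a b c d : ℤ) (x y : Fin 3 → ℤ) :
    cubeMul a b c d x y 2 = x 0 * y 2 + x 2 * y 0 - a * (x 1 * y 1) - c * (x 2 * y 2) := rfl

private lemma single_apply' (i k : Fin 3) : (Pi.single i 1 : Fin 3 → ℤ) k =
    if k = i then 1 else 0 := by simp [Pi.single_apply]

/-- For every integral binary cubic form `f = (a,b,c,d)`, the multiplication table
`ωθ = −ad`, `ω² = −ac + bω − aθ`, `θ² = −bd + dω − cθ` defines a commutative, associative,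
unital ring structure on the free ℤ-module `Fin 3 → ℤ` with basis `⟨1, ω, θ⟩ = (e₀,e₁,e₂)`,
and the discriminant of this ring — the determinant of the trace matrix `(Tr(eᵢeⱼ))` — equals
the discriminant `D(f) = b²c² + 18abcd − 4ac³ − 4b³d − 27a²d²` of the form. -/
theorem cubic_ring_of_form (a b c d : ℤ) :
    ∃ mul : (Fin 3 → ℤ) →ₗ[ℤ] (Fin 3 → ℤ) →ₗ[ℤ] (Fin 3 → ℤ),
      (∀ x, mul (Pi.single 0 1) x = x) ∧
      (∀ x y, mul x y = mul y x) ∧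
      (∀ x y z, mul (mul x y) z = mul x (mul y z)) ∧
      mul (Pi.single 1 1) (Pi.single 2 1) = (-(a * d)) • (Pi.single 0 1 : Fin 3 → ℤ) ∧
      mul (Pi.single 1 1) (Pi.single 1 1)
        = (-(a * c)) • (Pi.single 0 1 : Fin 3 → ℤ) + b • (Pi.single 1 1 : Fin 3 → ℤ)
          + (-a) • (Pi.single 2 1 : Fin 3 → ℤ) ∧
      mul (Pi.single 2 1) (Pi.single 2 1)
        = (-(b * d)) • (Pi.single 0 1 : Fin 3 → ℤ) + d • (Pi.single 1 1 : Fin 3 → ℤ)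
          + (-c) • (Pi.single 2 1 : Fin 3 → ℤ) ∧
      Matrix.det (Matrix.of fun i j : Fin 3 =>
          LinearMap.trace ℤ (Fin 3 → ℤ) (mul (mul (Pi.single i 1) (Pi.single j 1))))
        = b ^ 2 * c ^ 2 + 18 * a * b * c * d - 4 * a * c ^ 3 - 4 * b ^ 3 * d
          - 27 * a ^ 2 * d ^ 2 := by
  classical
  refine ⟨cubeMul a b c d, ?_, ?_, ?_, ?_, ?_, ?_, ?_⟩
  · intro x; funext k; fin_cases k <;>
      simp [fin3_zero, fin3_one, fin3_two, cubeMul_apply0, cubeMul_apply1, cubeMul_apply2,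
        single_apply']
  · intro x y; funext k; fin_cases k <;>
      simp only [fin3_zero, fin3_one, fin3_two, cubeMul_apply0, cubeMul_apply1, cubeMul_apply2] <;> ring
  · intro x y z; funext k; fin_cases k <;>
      simp only [fin3_zero, fin3_one, fin3_two, cubeMul_apply0, cubeMul_apply1, cubeMul_apply2] <;> ring
  · funext k; fin_cases k <;>
      simp [fin3_zero, fin3_one, fin3_two, cubeMul_apply0, cubeMul_apply1, cubeMul_apply2, single_apply']
  · funext k; fin_cases k <;>
      simp [fin3_zero, fin3_one, fin3_two, cubeMul_apply0, cubeMul_apply1, cubeMul_apply2, single_apply']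
  · funext k; fin_cases k <;>
      simp [fin3_zero, fin3_one, fin3_two, cubeMul_apply0, cubeMul_apply1, cubeMul_apply2, single_apply']
  · have htr : ∀ v : Fin 3 → ℤ, LinearMap.trace ℤ (Fin 3 → ℤ) (cubeMul a b c d v)
        = 3 * v 0 + b * v 1 - c * v 2 := by
      intro v
      rw [LinearMap.trace_eq_matrix_trace ℤ (Pi.basisFun ℤ (Fin 3))]
      simp only [Matrix.trace, Fin.sum_univ_three, Matrix.diag_apply,
        LinearMap.toMatrix_apply, Pi.basisFun_repr, Pi.basisFun_apply]
      simp [LinearMap.coe_single, cubeMul_apply0, cubeMul_apply1, cubeMul_apply2,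
        single_apply']
      ring
    rw [Matrix.det_fin_three]
    simp only [Matrix.of_apply, htr]
    simp [cubeMul_apply0, cubeMul_apply1, cubeMul_apply2, single_apply']
    ring
end

section
/- For every g ∈ GL₂(ℝ) and all x, y ∈ ℝ⁴, the alternating pairing satisfies ⟨x, y⟩ = ⟨g·x, g^ι·y⟩, where g^ι = g/det(g); moreover g^ι = w·(g⁻¹)ᵗ·w⁻¹ where w is the matrix with rows (0,−1) and (1,0). -/
/-- The action of a 2×2 matrix `g` on the coefficient vector `x = (a,b,c,d)` of the binary
cubic form `a u³ + b u²v + c uv² + d v³`, given by `(g·f)(u,v) = f((u,v)·g)`. -/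
def cubicAct (g : Matrix (Fin 2) (Fin 2) ℝ) (x : Fin 4 → ℝ) : Fin 4 → ℝ :=
  ![x 0 * g 0 0 ^ 3 + x 1 * g 0 0 ^ 2 * g 0 1 + x 2 * g 0 0 * g 0 1 ^ 2 + x 3 * g 0 1 ^ 3,
    3 * x 0 * g 0 0 ^ 2 * g 1 0 + x 1 * (g 0 0 ^ 2 * g 1 1 + 2 * g 0 0 * g 0 1 * g 1 0)
      + x 2 * (2 * g 0 0 * g 0 1 * g 1 1 + g 1 0 * g 0 1 ^ 2) + 3 * x 3 * g 0 1 ^ 2 * g 1 1,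
    3 * x 0 * g 0 0 * g 1 0 ^ 2 + x 1 * (2 * g 0 0 * g 1 0 * g 1 1 + g 1 0 ^ 2 * g 0 1)
      + x 2 * (g 0 0 * g 1 1 ^ 2 + 2 * g 1 0 * g 0 1 * g 1 1) + 3 * x 3 * g 0 1 * g 1 1 ^ 2,
    x 0 * g 1 0 ^ 3 + x 1 * g 1 0 ^ 2 * g 1 1 + x 2 * g 1 0 * g 1 1 ^ 2 + x 3 * g 1 1 ^ 3]

/-- The alternating pairing `⟨x,y⟩ = x₄y₁ − (1/3)x₃y₂ + (1/3)x₂y₃ − x₁y₄` on the space of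
binary cubic forms. -/
noncomputable def cubicPair (x y : Fin 4 → ℝ) : ℝ :=
  x 3 * y 0 - (1/3) * x 2 * y 1 + (1/3) * x 1 * y 2 - x 0 * y 3

lemma cubicAct_smul (c : ℝ) (g : Matrix (Fin 2) (Fin 2) ℝ) (y : Fin 4 → ℝ) :
    cubicAct (c • g) y = fun i => c ^ 3 * cubicAct g y i := by
  funext i
  fin_cases i <;> simp [cubicAct, Matrix.smul_apply] <;> ring

lemma cubicPair_act (g : Matrix (Fin 2) (Fin 2) ℝ) (x y : Fin 4 → ℝ) :
    cubicPair (cubicAct g x) (cubicAct g y)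
      = (g 0 0 * g 1 1 - g 0 1 * g 1 0) ^ 3 * cubicPair x y := by
  simp only [cubicPair, cubicAct, Matrix.cons_val_zero, Matrix.cons_val_one, Matrix.head_cons,
    Matrix.cons_val_two, Matrix.tail_cons, Matrix.cons_val_three]
  ring

/-- For `g ∈ GL₂(ℝ)` and `g^ι = g / det g` one has `g^ι = w (g⁻¹)ᵗ w⁻¹` with
`w = !![0,-1;1,0]`, and the alternating pairing satisfies `⟨x,y⟩ = ⟨g·x, g^ι·y⟩` for the
twisted action on binary cubic forms. -/
theorem cubicPair_invariant (g : Matrix (Fin 2) (Fin 2) ℝ) (hg : IsUnit g.det) :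
    (g.det⁻¹ • g = !![(0:ℝ), -1; 1, 0] * g⁻¹.transpose * (!![(0:ℝ), -1; 1, 0])⁻¹) ∧
    ∀ x y : Fin 4 → ℝ,
      cubicPair x y = cubicPair (cubicAct g x) (cubicAct (g.det⁻¹ • g) y) := by
  have hd : g.det ≠ 0 := hg.ne_zero
  have hdet : g.det = g 0 0 * g 1 1 - g 0 1 * g 1 0 := Matrix.det_fin_two g
  have hinv : g⁻¹ = g.det⁻¹ • !![g 1 1, -g 0 1; -g 1 0, g 0 0] := by
    rw [Matrix.inv_def, Matrix.adjugate_fin_two, Ring.inverse_eq_inv]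
  have hw : (!![(0:ℝ), -1; 1, 0])⁻¹ = !![(0:ℝ), 1; -1, 0] := by
    apply Matrix.inv_eq_right_inv
    rw [Matrix.mul_fin_two, Matrix.one_fin_two]; norm_num
  have htr : (!![g 1 1, -g 0 1; -g 1 0, g 0 0]).transpose
      = !![g 1 1, -g 1 0; -g 0 1, g 0 0] := by
    rw [Matrix.eta_fin_two (!![g 1 1, -g 0 1; -g 1 0, g 0 0]).transpose]
    simp
  constructor
  · rw [hinv, hw, Matrix.transpose_smul, htr, Matrix.mul_smul, Matrix.smul_mul]
    congr 1
    rw [Matrix.mul_fin_two, Matrix.mul_fin_two, Matrix.eta_fin_two g]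
    norm_num
  · intro x y
    rw [cubicAct_smul]
    have h2 : cubicPair (cubicAct g x) (fun i => (g.det⁻¹) ^ 3 * cubicAct g y i)
        = (g.det⁻¹) ^ 3 * cubicPair (cubicAct g x) (cubicAct g y) := by
      simp only [cubicPair]; ring
    rw [h2, cubicPair_act, ← hdet]
    field_simp
end

section
/- Let G⁺ = {g ∈ GL₂(ℝ) : det g > 0} act on binary cubic forms by the twisted action, and set x₊ = (1/√2, 0, −1/√2, 0) and x₋ = (1/√2, 0, 1/√2, 0). Then D(x₊) = 1 and D(x₋) = −1; every x ∈ ℝ⁴ with D(x) > 0 equals g·x₊ for some g ∈ G⁺, and every x ∈ ℝ⁴ with D(x) < 0 equals g·x₋ for some g ∈ G⁺; the stabilizer of x₊ in G⁺ is a group of order 3, and the stabilizer of x₋ in G⁺ is trivial. -/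
set_option maxHeartbeats 2000000


/-- The discriminant of the binary cubic form with coefficients `(a,b,c,d)`. -/
def cubicDisc (x : Fin 4 → ℝ) : ℝ :=
  x 1 ^ 2 * x 2 ^ 2 + 18 * x 0 * x 1 * x 2 * x 3 - 4 * x 0 * x 2 ^ 3 - 4 * x 1 ^ 3 * x 3
    - 27 * x 0 ^ 2 * x 3 ^ 2

/-- The base point `x₊ = (1/√2, 0, −1/√2, 0)` of the positive-discriminant orbit. -/
noncomputable def xplus : Fin 4 → ℝ := ![1 / Real.sqrt 2, 0, -(1 / Real.sqrt 2), 0]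

/-- The base point `x₋ = (1/√2, 0, 1/√2, 0)` of the negative-discriminant orbit. -/
noncomputable def xminus : Fin 4 → ℝ := ![1 / Real.sqrt 2, 0, 1 / Real.sqrt 2, 0]

lemma cubicAct_one (x : Fin 4 → ℝ) : cubicAct 1 x = x := by
  funext i
  fin_cases i <;> simp [cubicAct, Matrix.one_apply]

lemma cubicAct_mul (g h : Matrix (Fin 2) (Fin 2) ℝ) (x : Fin 4 → ℝ) :
    cubicAct (g * h) x = cubicAct g (cubicAct h x) := by
  funext i
  fin_cases i <;>
    · simp [cubicAct, Matrix.mul_apply, Fin.sum_univ_two]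
      ring

lemma cubicDisc_act (g : Matrix (Fin 2) (Fin 2) ℝ) (x : Fin 4 → ℝ) :
    cubicDisc (cubicAct g x) = g.det ^ 6 * cubicDisc x := by
  simp [cubicDisc, cubicAct, Matrix.det_fin_two]
  ring

lemma exists_cubic_root_aux (a b c d : ℝ) (ha : 0 < a) :
    ∃ t : ℝ, a*t^3 + b*t^2 + c*t + d = 0 := by
  obtain ⟨M, hM1, hM2⟩ : ∃ M:ℝ, 1 ≤ M ∧ a + (|b|+|c|+|d|) ≤ a*M := by
    refine ⟨1 + (|b|+|c|+|d|)/a, le_add_of_nonneg_right (by positivity), ?_⟩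
    rw [mul_add, mul_div_cancel₀ _ (ne_of_gt ha)]; simp
  have hM0 : 0 < M := lt_of_lt_of_le one_pos hM1
  have hb := abs_nonneg b; have hc := abs_nonneg c; have hd := abs_nonneg d
  have key1 : 0 ≤ (a*M - (a+(|b|+|c|+|d|))) * M^2 :=
    mul_nonneg (by linarith) (sq_nonneg M)
  have key2 : 0 ≤ |c| * (M * (M-1)) :=
    mul_nonneg hc (mul_nonneg (le_of_lt hM0) (by linarith))
  have key3 : 0 ≤ |d| * (M^2 - 1) :=
    mul_nonneg hd (by nlinarith)
  have hfM : (0:ℝ) ≤ a*M^3 + b*M^2 + c*M + d := by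
    have h1 : b ≥ -|b| := neg_abs_le b
    have h2 : c ≥ -|c| := neg_abs_le c
    have h3 : d ≥ -|d| := neg_abs_le d
    nlinarith [sq_nonneg M, mul_pos ha hM0]
  have hfm : a*(-M)^3 + b*(-M)^2 + c*(-M) + d ≤ 0 := by
    have h1 : b ≤ |b| := le_abs_self b
    have h2 : c ≥ -|c| := neg_abs_le c
    have h3 : d ≤ |d| := le_abs_self d
    nlinarith [sq_nonneg M, mul_pos ha hM0]
  have hcont : ContinuousOn (fun t : ℝ => a*t^3 + b*t^2 + c*t + d) (Set.Icc (-M) M) := by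
    fun_prop
  obtain ⟨t, _, ht⟩ := intermediate_value_Icc (by linarith : -M ≤ M) hcont ⟨hfm, hfM⟩
  exact ⟨t, ht⟩

lemma exists_cubic_root (a b c d : ℝ) (ha : a ≠ 0) :
    ∃ t : ℝ, a*t^3 + b*t^2 + c*t + d = 0 := by
  rcases ha.lt_or_gt with h | h
  · obtain ⟨t, ht⟩ := exists_cubic_root_aux (-a) (-b) (-c) (-d) (by linarith)
    exact ⟨t, by linarith⟩
  · exact exists_cubic_root_aux a b c d h

lemma exists_cbrt (z : ℝ) : ∃ α : ℝ, α^3 = z := by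
  obtain ⟨t, ht⟩ := exists_cubic_root 1 0 0 (-z) one_ne_zero
  exact ⟨t, by linarith⟩

lemma key_pos' (a l t rp rm : ℝ) (ha : a ≠ 0) (hl : l ≠ 0) (hm : 1 - l ≠ 0)
    (hd : rp - rm ≠ 0) (ht : t = l*rp + (1-l)*rm) :
    ∃ g : Matrix (Fin 2) (Fin 2) ℝ, g.det ≠ 0 ∧
      cubicAct g xplus = ![a, -(a*(t+rp+rm)), a*(t*rp+t*rm+rp*rm), -(a*(t*rp*rm))] := by
  have hs : Real.sqrt 2 ≠ 0 := by positivity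
  obtain ⟨α, hα⟩ := exists_cbrt (Real.sqrt 2*a/(4*l*(1-l)))
  have hα' : 4*l*(1-l)*α^3 = Real.sqrt 2*a := by rw [hα]; field_simp
  have hαne : α ≠ 0 := by
    intro h0
    apply mul_ne_zero hs ha
    rw [← hα', h0]; ring
  refine ⟨Matrix.of ![![α, α*(1-2*l)], ![-(α*t), α*(2*l*rp - t)]], ?_, ?_⟩
  · rw [Matrix.det_fin_two]
    simp only [Matrix.of_apply, Matrix.cons_val', Matrix.cons_val_zero, Matrix.cons_val_one,
      Matrix.head_cons, Matrix.empty_val', Matrix.cons_val_fin_one, Matrix.head_fin_const]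
    have e1 : α * (α * (2 * l * rp - t)) - α * (1 - 2 * l) * -(α * t)
        = (α*α)*(2*l*(1-l)*(rp-rm)) := by rw [ht]; ring
    rw [e1]
    exact mul_ne_zero (mul_ne_zero hαne hαne)
      (mul_ne_zero (mul_ne_zero (mul_ne_zero two_ne_zero hl) hm) hd)
  · subst ht
    funext i
    fin_cases i <;>
      · simp only [cubicAct, xplus, Matrix.of_apply, Matrix.cons_val', Matrix.cons_val_zero,
          Matrix.cons_val_one, Matrix.head_cons, Matrix.empty_val', Matrix.cons_val_fin_one,
          Matrix.head_fin_const, Fin.isValue, Matrix.cons_val_two, Matrix.cons_val_three,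
          Matrix.tail_cons, Fin.zero_eta, Fin.mk_one, Fin.reduceFinMk, Matrix.cons_val]
        field_simp
        ring_nf
        simp only [hα]
        field_simp
        try ring_nf
        try simp only [Real.sq_sqrt (by norm_num : (0:ℝ) ≤ 2)]
        try ring

lemma key_neg' (a t p q : ℝ) (ha : a ≠ 0) (hq : q ≠ 0) :
    ∃ g : Matrix (Fin 2) (Fin 2) ℝ, g.det ≠ 0 ∧
      cubicAct g xminus = ![a, -(a*(t+2*p)), a*(2*p*t+(p^2+q^2)), -(a*(t*(p^2+q^2)))] := by
  have hs : Real.sqrt 2 ≠ 0 := by positivity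
  have hD : q^2 + (p-t)^2 ≠ 0 := by positivity
  obtain ⟨α, hα⟩ := exists_cbrt (Real.sqrt 2*a*q^2/(q^2+(p-t)^2))
  have hαne : α ≠ 0 := by
    intro h0
    have hz : Real.sqrt 2*a*q^2/(q^2+(p-t)^2) = 0 := by rw [← hα, h0]; ring
    rcases div_eq_zero_iff.mp hz with h|h
    · exact (mul_ne_zero (mul_ne_zero hs ha) (pow_ne_zero 2 hq)) h
    · exact hD h
  refine ⟨Matrix.of ![![α, α*(p-t)/q], ![-(α*t), -(α*q + (α*(p-t)/q)*p)]], ?_, ?_⟩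
  · rw [Matrix.det_fin_two]
    simp only [Matrix.of_apply, Matrix.cons_val', Matrix.cons_val_zero, Matrix.cons_val_one,
      Matrix.head_cons, Matrix.empty_val', Matrix.cons_val_fin_one, Matrix.head_fin_const]
    have e1 : α * -(α*q + (α*(p-t)/q)*p) - α*(p-t)/q * -(α*t)
        = -((α*α) * ((q^2+(p-t)^2)/q)) := by field_simp; ring
    rw [e1]
    exact neg_ne_zero.mpr (mul_ne_zero (mul_ne_zero hαne hαne) (div_ne_zero hD hq))
  · funext i
    fin_cases i <;>
      · simp only [cubicAct, xminus, Matrix.of_apply, Matrix.cons_val', Matrix.cons_val_zero,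
          Matrix.cons_val_one, Matrix.head_cons, Matrix.empty_val', Matrix.cons_val_fin_one,
          Matrix.head_fin_const, Fin.isValue, Matrix.cons_val_two, Matrix.cons_val_three,
          Matrix.tail_cons, Fin.zero_eta, Fin.mk_one, Fin.reduceFinMk, Matrix.cons_val]
        field_simp
        ring_nf
        simp only [hα]
        field_simp
        ring_nf
        try simp only [Real.sq_sqrt (by norm_num : (0:ℝ) ≤ 2)]
        try ring

/-- Reduce to nonzero leading coefficient. -/
lemma exists_leading (x : Fin 4 → ℝ) (hx : cubicDisc x ≠ 0) :
    ∃ h : Matrix (Fin 2) (Fin 2) ℝ, h.det ≠ 0 ∧ (cubicAct h x) 0 ≠ 0 := by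
  by_cases h0 : x 0 ≠ 0
  · exact ⟨1, by simp, by rwa [cubicAct_one]⟩
  push_neg at h0
  by_cases h3 : x 3 ≠ 0
  · refine ⟨Matrix.of ![![0,1],![1,0]], by simp [Matrix.det_fin_two], ?_⟩
    simpa [cubicAct] using h3
  push_neg at h3
  by_cases h12 : x 1 + x 2 ≠ 0
  · refine ⟨Matrix.of ![![1,1],![0,1]], by simp [Matrix.det_fin_two], ?_⟩
    simp [cubicAct, h0, h3]
    intro hcon
    exact h12 (by linarith)
  push_neg at h12
  have h2 : x 2 ≠ 0 := by
    intro hc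
    apply hx
    have h1 : x 1 = 0 := by linarith
    simp [cubicDisc, h0, h1, hc, h3]
  refine ⟨Matrix.of ![![1,-1],![0,1]], by simp [Matrix.det_fin_two], ?_⟩
  simp [cubicAct, h0, h3]
  intro hcon
  apply h2
  linarith

lemma sign_fix (y x : Fin 4 → ℝ)
    (hJ : cubicAct (Matrix.of ![![(1:ℝ),0],![0,-1]]) y = y)
    (h : ∃ g : Matrix (Fin 2) (Fin 2) ℝ, g.det ≠ 0 ∧ x = cubicAct g y) :
    ∃ g : Matrix (Fin 2) (Fin 2) ℝ, 0 < g.det ∧ x = cubicAct g y := by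
  obtain ⟨g, hg, hx⟩ := h
  rcases hg.lt_or_gt with hneg | hpos
  · refine ⟨g * Matrix.of ![![(1:ℝ),0],![0,-1]], ?_, ?_⟩
    · rw [Matrix.det_mul]
      have : (Matrix.of ![![(1:ℝ),0],![0,-1]]).det = -1 := by
        simp [Matrix.det_fin_two]
      rw [this]; nlinarith
    · rw [cubicAct_mul, hJ]; exact hx
  · exact ⟨g, hpos, hx⟩

lemma J_fix_plus : cubicAct (Matrix.of ![![(1:ℝ),0],![0,-1]]) xplus = xplus := by
  funext i
  fin_cases i <;> simp [cubicAct, xplus]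

lemma J_fix_minus : cubicAct (Matrix.of ![![(1:ℝ),0],![0,-1]]) xminus = xminus := by
  funext i
  fin_cases i <;> simp [cubicAct, xminus]

/-- Inverse step -/
lemma orbit_transfer (h : Matrix (Fin 2) (Fin 2) ℝ) (hdet : h.det ≠ 0) (x y : Fin 4 → ℝ)
    (hxy : ∃ g : Matrix (Fin 2) (Fin 2) ℝ, g.det ≠ 0 ∧ cubicAct h x = cubicAct g y) :
    ∃ g : Matrix (Fin 2) (Fin 2) ℝ, g.det ≠ 0 ∧ x = cubicAct g y := by
  obtain ⟨g, hg, he⟩ := hxy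
  refine ⟨h⁻¹ * g, ?_, ?_⟩
  · rw [Matrix.det_mul, Matrix.det_nonsing_inv, Ring.inverse_eq_inv']
    exact mul_ne_zero (inv_ne_zero hdet) hg
  · rw [cubicAct_mul, ← he, ← cubicAct_mul, Matrix.nonsing_inv_mul h (isUnit_iff_ne_zero.mpr hdet), cubicAct_one]

/-- main positive orbit lemma, case x 0 ≠ 0 -/
lemma orbit_pos_main (y : Fin 4 → ℝ) (ha : y 0 ≠ 0) (hD : 0 < cubicDisc y) :
    ∃ g : Matrix (Fin 2) (Fin 2) ℝ, g.det ≠ 0 ∧ y = cubicAct g xplus := by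
  obtain ⟨t, ht⟩ := exists_cubic_root (y 0) (y 1) (y 2) (y 3) ha
  obtain ⟨a, ha0⟩ : ∃ a:ℝ, a = y 0 := ⟨_, rfl⟩
  obtain ⟨b, hb0⟩ : ∃ b:ℝ, b = y 1 := ⟨_, rfl⟩
  obtain ⟨c, hc0⟩ : ∃ c:ℝ, c = y 2 := ⟨_, rfl⟩
  obtain ⟨d, hd0⟩ : ∃ d:ℝ, d = y 3 := ⟨_, rfl⟩
  rw [← ha0] at ha
  have hroot : a*t^3 + b*t^2 + c*t + d = 0 := by rw [ha0, hb0, hc0, hd0]; exact ht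
  have hd : d = -(a*t^3+b*t^2+c*t) := by linarith
  obtain ⟨B, hB⟩ : ∃ B:ℝ, B = b + a*t := ⟨_, rfl⟩
  obtain ⟨C', hC⟩ : ∃ C':ℝ, C' = c + B*t := ⟨_, rfl⟩
  have hid : cubicDisc y = (B^2-4*a*C')*(a*t^2+B*t+C')^2 := by
    simp only [cubicDisc, ← ha0, ← hb0, ← hc0, ← hd0]
    rw [hd, hB, hC, hB]; ring
  have hKS : 0 < (B^2-4*a*C')*(a*t^2+B*t+C')^2 := hid ▸ hD
  have hS : a*t^2+B*t+C' ≠ 0 := by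
    intro h0
    rw [h0] at hKS; simp at hKS
  have hS2 : 0 < (a*t^2+B*t+C')^2 := by positivity
  have hK : 0 < B^2-4*a*C' := by nlinarith
  obtain ⟨r, hrdef⟩ : ∃ r:ℝ, r = Real.sqrt (B^2-4*a*C') := ⟨_, rfl⟩
  have hr : r^2 = B^2-4*a*C' := by rw [hrdef]; exact Real.sq_sqrt hK.le
  have hrpos : 0 < r := by rw [hrdef]; exact Real.sqrt_pos.mpr hK
  obtain ⟨rp, hrp⟩ : ∃ rp:ℝ, rp = (-B+r)/(2*a) := ⟨_, rfl⟩
  obtain ⟨rm, hrm⟩ : ∃ rm:ℝ, rm = (-B-r)/(2*a) := ⟨_, rfl⟩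
  have hdiff : rp - rm = r/a := by rw [hrp, hrm]; field_simp; ring
  have hrpm : rp - rm ≠ 0 := by
    rw [hdiff]; exact div_ne_zero (ne_of_gt hrpos) ha
  have hqp : a*rp^2 + B*rp + C' = 0 := by
    rw [hrp]; field_simp; linear_combination hr
  have hqm : a*rm^2 + B*rm + C' = 0 := by
    rw [hrm]; field_simp; linear_combination hr
  have h2 : t ≠ rp := by
    intro h; apply hS; rw [h]; exact hqp
  have h3 : t ≠ rm := by
    intro h; apply hS; rw [h]; exact hqm
  obtain ⟨l, hldef⟩ : ∃ l:ℝ, l = (t - rm)/(rp - rm) := ⟨_, rfl⟩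
  have hl : l ≠ 0 := by
    rw [hldef]
    exact div_ne_zero (sub_ne_zero.mpr h3) hrpm
  have hm : 1 - l ≠ 0 := by
    rw [hldef]
    rw [show 1 - (t - rm)/(rp - rm) = (rp - t)/(rp - rm) by field_simp; ring]
    exact div_ne_zero (sub_ne_zero.mpr (Ne.symm h2)) hrpm
  have htl : t = l*rp + (1-l)*rm := by
    rw [hldef]; field_simp; ring
  obtain ⟨g, hg, hact⟩ := key_pos' a l t rp rm ha hl hm hrpm htl
  refine ⟨g, hg, ?_⟩
  rw [hact]
  have hsum : a*(rp+rm) = -B := by rw [hrp, hrm]; field_simp; ring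
  have hprod4 : 4*a^2*(rp*rm) = B^2 - r^2 := by rw [hrp, hrm]; field_simp; ring
  have h4a : (4:ℝ)*a ≠ 0 := mul_ne_zero (by norm_num) ha
  have hpr : a*(rp*rm) = C' := by
    have h4 : (4*a)*(a*(rp*rm)) = (4*a)*C' := by linear_combination hprod4 - hr
    exact mul_left_cancel₀ h4a h4
  have hv1 : y 1 = -(a*(t+rp+rm)) := by
    rw [← hb0]; linear_combination hsum - hB
  have hv2 : y 2 = a*(t*rp+t*rm+rp*rm) := by
    rw [← hc0]; linear_combination (-t)*hsum - hpr - hC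
  have hv3 : y 3 = -(a*(t*rp*rm)) := by
    rw [← hd0]; linear_combination t*hpr + t*hC + t^2*hB + hroot
  funext i
  fin_cases i
  · simpa using ha0.symm
  · simpa using hv1
  · simpa using hv2
  · simpa using hv3
 
/-- main negative orbit lemma, case x 0 ≠ 0 -/
lemma orbit_neg_main (y : Fin 4 → ℝ) (ha : y 0 ≠ 0) (hD : cubicDisc y < 0) :
    ∃ g : Matrix (Fin 2) (Fin 2) ℝ, g.det ≠ 0 ∧ y = cubicAct g xminus := by
  obtain ⟨t, ht⟩ := exists_cubic_root (y 0) (y 1) (y 2) (y 3) ha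
  obtain ⟨a, ha0⟩ : ∃ a:ℝ, a = y 0 := ⟨_, rfl⟩
  obtain ⟨b, hb0⟩ : ∃ b:ℝ, b = y 1 := ⟨_, rfl⟩
  obtain ⟨c, hc0⟩ : ∃ c:ℝ, c = y 2 := ⟨_, rfl⟩
  obtain ⟨d, hd0⟩ : ∃ d:ℝ, d = y 3 := ⟨_, rfl⟩
  rw [← ha0] at ha
  have hroot : a*t^3 + b*t^2 + c*t + d = 0 := by rw [ha0, hb0, hc0, hd0]; exact ht
  have hd : d = -(a*t^3+b*t^2+c*t) := by linarith
  obtain ⟨B, hB⟩ : ∃ B:ℝ, B = b + a*t := ⟨_, rfl⟩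
  obtain ⟨C', hC⟩ : ∃ C':ℝ, C' = c + B*t := ⟨_, rfl⟩
  have hid : cubicDisc y = (B^2-4*a*C')*(a*t^2+B*t+C')^2 := by
    simp only [cubicDisc, ← ha0, ← hb0, ← hc0, ← hd0]
    rw [hd, hB, hC, hB]; ring
  have hKS : (B^2-4*a*C')*(a*t^2+B*t+C')^2 < 0 := hid ▸ hD
  have hK : 4*a*C' - B^2 > 0 := by nlinarith [sq_nonneg (a*t^2+B*t+C')]
  obtain ⟨q, hqdef⟩ : ∃ q:ℝ, q = Real.sqrt (4*a*C' - B^2) / (2*a) := ⟨_, rfl⟩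
  have hq2 : q^2 = (4*a*C' - B^2)/(4*a^2) := by
    rw [hqdef, div_pow, Real.sq_sqrt hK.le]; ring
  have hq : q ≠ 0 := by
    rw [hqdef]
    exact div_ne_zero (ne_of_gt (Real.sqrt_pos.mpr hK)) (by simpa using ha)
  obtain ⟨p, hp⟩ : ∃ p:ℝ, p = -B/(2*a) := ⟨_, rfl⟩
  obtain ⟨g, hg, hact⟩ := key_neg' a t p q ha hq
  refine ⟨g, hg, ?_⟩
  rw [hact]
  have hps : 2*a*p = -B := by rw [hp]; field_simp
  have h4a : (4:ℝ)*a ≠ 0 := mul_ne_zero (by norm_num) ha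
  have hpq : a*(p^2+q^2) = C' := by
    have h4 : (4*a)*(a*(p^2+q^2)) = (4*a)*C' := by
      rw [hq2, hp]; field_simp; ring
    exact mul_left_cancel₀ h4a h4
  have hv1 : y 1 = -(a*(t+2*p)) := by
    rw [← hb0]; linear_combination hps - hB
  have hv2 : y 2 = a*(2*p*t+(p^2+q^2)) := by
    rw [← hc0]; linear_combination (-t)*hps - hpq - hC
  have hv3 : y 3 = -(a*(t*(p^2+q^2))) := by
    rw [← hd0]; linear_combination t*hpq + t*hC + t^2*hB + hroot
  funext i
  fin_cases i
  · simpa using ha0.symm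
  · simpa using hv1
  · simpa using hv2
  · simpa using hv3

lemma stab_minus (g : Matrix (Fin 2) (Fin 2) ℝ) (hdet : 0 < g.det)
    (hfix : cubicAct g xminus = xminus) : g = 1 := by
  have hs : Real.sqrt 2 ≠ 0 := by positivity
  have e0 := congrFun hfix 0
  have e1 := congrFun hfix 1
  have e2 := congrFun hfix 2
  have e3 := congrFun hfix 3
  simp [cubicAct, xminus] at e0 e1 e2 e3
  rw [Matrix.det_fin_two] at hdet
  field_simp at e0 e1 e2 e3
  have hC : g 1 0 = 0 := by
    rcases mul_eq_zero.mp (show g 1 0 * (g 1 0^2 + g 1 1^2) = 0 by linear_combination e3)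
      with h | h
    · exact h
    · have h2 : g 1 0 ^ 2 = 0 := by nlinarith [sq_nonneg (g 1 0), sq_nonneg (g 1 1)]
      exact pow_eq_zero_iff (two_ne_zero) |>.mp h2
  rw [hC] at e1 e2 hdet
  have e1' : g 0 0 * (g 0 1 * g 1 1) = 0 := by linear_combination (1/2) * e1
  have e2' : g 0 0 * g 1 1^2 = 1 := by linear_combination e2
  have hA : g 0 0 ≠ 0 := by
    intro h; rw [h] at e0; simp at e0
  have hDne : g 1 1 ≠ 0 := by
    intro h; rw [h] at e2'; simp at e2'
  have hB : g 0 1 = 0 := by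
    rcases mul_eq_zero.mp e1' with h | h
    · exact absurd h hA
    · rcases mul_eq_zero.mp h with h' | h'
      · exact h'
      · exact absurd h' hDne
  rw [hB] at e0
  have e0' : g 0 0 ^ 3 = 1 := by linear_combination e0
  have hA1 : g 0 0 = 1 := by
    rcases mul_eq_zero.mp
        (show (g 0 0 - 1) * (g 0 0^2 + g 0 0 + 1) = 0 by linear_combination e0') with h | h
    · linarith [sub_eq_zero.mp h]
    · nlinarith [sq_nonneg (2*g 0 0 + 1)]
  rw [hA1, hB] at hdet
  have hdet' : 0 < g 1 1 := by simpa using hdet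
  rw [hA1] at e2'
  have hD1 : g 1 1 = 1 := by
    rcases mul_eq_zero.mp (show (g 1 1 - 1)*(g 1 1 + 1) = 0 by linear_combination e2')
      with h | h
    · linarith [sub_eq_zero.mp h]
    · linarith
  ext i j
  fin_cases i <;> fin_cases j <;> simp [Matrix.one_apply, hA1, hB, hC, hD1]

lemma stab_plus_fwd (g : Matrix (Fin 2) (Fin 2) ℝ) (hdet : 0 < g.det)
    (hfix : cubicAct g xplus = xplus) :
    g = 1 ∨ g = Matrix.of ![![-1/2, -3/2], ![1/2, -1/2]]
      ∨ g = Matrix.of ![![-1/2, 3/2], ![-1/2, -1/2]] := by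
  have hs : Real.sqrt 2 ≠ 0 := by positivity
  have e0 := congrFun hfix 0
  have e1 := congrFun hfix 1
  have e2 := congrFun hfix 2
  have e3 := congrFun hfix 3
  simp [cubicAct, xplus] at e0 e1 e2 e3
  rw [Matrix.det_fin_two] at hdet
  field_simp at e0 e1 e2 e3
  rcases mul_eq_zero.mp (show g 1 0 * ((g 1 0 - g 1 1) * (g 1 0 + g 1 1)) = 0 by
      linear_combination e3) with hC | hrest
  · -- C = 0 : g = 1
    left
    rw [hC] at e1 e2 hdet
    have e1' : g 0 0 * (g 0 1 * g 1 1) = 0 := by linear_combination (-1/2) * e1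
    have e2' : g 0 0 * g 1 1 ^ 2 = 1 := by linear_combination -e2
    have hA : g 0 0 ≠ 0 := by intro h; rw [h] at e0; simp at e0
    have hDne : g 1 1 ≠ 0 := by intro h; rw [h] at e2'; simp at e2'
    have hB : g 0 1 = 0 := by
      rcases mul_eq_zero.mp e1' with h | h
      · exact absurd h hA
      · rcases mul_eq_zero.mp h with h' | h'
        · exact h'
        · exact absurd h' hDne
    rw [hB] at e0
    have e0' : g 0 0 ^ 3 = 1 := by linear_combination e0
    have hA1 : g 0 0 = 1 := by
      rcases mul_eq_zero.mp
          (show (g 0 0 - 1) * (g 0 0^2 + g 0 0 + 1) = 0 by linear_combination e0') with h | h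
      · linarith [sub_eq_zero.mp h]
      · nlinarith [sq_nonneg (2*g 0 0 + 1)]
    rw [hA1, hB] at hdet
    have hdet' : 0 < g 1 1 := by simpa using hdet
    rw [hA1] at e2'
    have hD1 : g 1 1 = 1 := by
      rcases mul_eq_zero.mp (show (g 1 1 - 1)*(g 1 1 + 1) = 0 by linear_combination e2')
        with h | h
      · linarith [sub_eq_zero.mp h]
      · linarith
    ext i j
    fin_cases i <;> fin_cases j <;> simp [Matrix.one_apply, hA1, hB, hC, hD1]
  rcases mul_eq_zero.mp hrest with h | h
  · -- D = C : g = !![-1/2, 3/2; -1/2, -1/2]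
    right; right
    have hD : g 1 1 = g 1 0 := (sub_eq_zero.mp h).symm
    rw [hD] at e1 e2 hdet
    have e2' : 2 * g 1 0^2 * (g 0 0 - g 0 1) = -1 := by linear_combination e2
    have hABne : g 0 0 - g 0 1 ≠ 0 := by
      intro h0; rw [h0] at e2'; simp at e2'
    have hCne : g 1 0 ≠ 0 := by
      intro h0; rw [h0] at e2'; simp at e2'
    have e1' : g 1 0 * ((3*g 0 0 + g 0 1) * (g 0 0 - g 0 1)) = 0 := by linear_combination e1
    have hB : g 0 1 = -(3*g 0 0) := by
      rcases mul_eq_zero.mp e1' with h0 | h0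
      · exact absurd h0 hCne
      · rcases mul_eq_zero.mp h0 with h1 | h1
        · linarith
        · exact absurd h1 hABne
    rw [hB] at e0 e2' hdet
    have hA : g 0 0 = -(1/2) := by
      rcases mul_eq_zero.mp (show (2*g 0 0 + 1)*(4*g 0 0^2 - 2*g 0 0 + 1) = 0 by
          linear_combination -e0) with h0 | h0
      · linarith
      · nlinarith [sq_nonneg (4*g 0 0 - 1)]
    rw [hA] at e2' hdet hB
    have hCneg : g 1 0 < 0 := by nlinarith
    have hC1 : g 1 0 = -(1/2) := by
      rcases mul_eq_zero.mp (show (g 1 0 - 1/2)*(g 1 0 + 1/2) = 0 by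
          linear_combination (-1/4 : ℝ) * e2') with h0 | h0
      · linarith [sub_eq_zero.mp h0]
      · linarith
    ext i j
    fin_cases i <;> fin_cases j <;>
      simp [hA, hB, hC1, hD.trans hC1] <;> norm_num
  · -- D = -C : g = !![-1/2, -3/2; 1/2, -1/2]
    right; left
    have hD : g 1 1 = -(g 1 0) := by linarith
    rw [hD] at e1 e2 hdet
    have e2' : 2 * g 1 0^2 * (g 0 0 + g 0 1) = -1 := by linear_combination e2
    have hABne : g 0 0 + g 0 1 ≠ 0 := by
      intro h0; rw [h0] at e2'; simp at e2'
    have hCne : g 1 0 ≠ 0 := by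
      intro h0; rw [h0] at e2'; simp at e2'
    have e1' : g 1 0 * ((3*g 0 0 - g 0 1) * (g 0 0 + g 0 1)) = 0 := by linear_combination e1
    have hB : g 0 1 = 3*g 0 0 := by
      rcases mul_eq_zero.mp e1' with h0 | h0
      · exact absurd h0 hCne
      · rcases mul_eq_zero.mp h0 with h1 | h1
        · linarith
        · exact absurd h1 hABne
    rw [hB] at e0 e2' hdet
    have hA : g 0 0 = -(1/2) := by
      rcases mul_eq_zero.mp (show (2*g 0 0 + 1)*(4*g 0 0^2 - 2*g 0 0 + 1) = 0 by
          linear_combination -e0) with h0 | h0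
      · linarith
      · nlinarith [sq_nonneg (4*g 0 0 - 1)]
    rw [hA] at e2' hdet hB
    have hCpos : 0 < g 1 0 := by nlinarith
    have hC1 : g 1 0 = 1/2 := by
      rcases mul_eq_zero.mp (show (g 1 0 - 1/2)*(g 1 0 + 1/2) = 0 by
          linear_combination (-1/4 : ℝ) * e2') with h0 | h0
      · linarith [sub_eq_zero.mp h0]
      · linarith
    have hD1 : g 1 1 = -(1/2) := by rw [hD, hC1]
    ext i j
    fin_cases i <;> fin_cases j <;>
      simp [hA, hB, hC1, hD1] <;> norm_num

lemma act_g1 : cubicAct (Matrix.of ![![(-1:ℝ)/2, -3/2], ![1/2, -1/2]]) xplus = xplus := by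
  funext i
  fin_cases i <;>
    · simp [cubicAct, xplus]
      ring_nf

lemma act_g2 : cubicAct (Matrix.of ![![(-1:ℝ)/2, 3/2], ![-1/2, -1/2]]) xplus = xplus := by
  funext i
  fin_cases i <;>
    · simp [cubicAct, xplus]
      ring_nf

lemma disc_plus : cubicDisc xplus = 1 := by
  have h2 : Real.sqrt 2 ^ 2 = 2 := Real.sq_sqrt (by norm_num)
  have hs : Real.sqrt 2 ≠ 0 := by positivity
  simp [cubicDisc, xplus]
  field_simp
  linear_combination (-(Real.sqrt 2 ^ 2) - 2) * h2

lemma disc_minus : cubicDisc xminus = -1 := by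
  have h2 : Real.sqrt 2 ^ 2 = 2 := Real.sq_sqrt (by norm_num)
  have hs : Real.sqrt 2 ≠ 0 := by positivity
  simp [cubicDisc, xminus]
  field_simp
  linear_combination (-(Real.sqrt 2 ^ 2) - 2) * h2

/-- `D(x₊) = 1`, `D(x₋) = −1`; the forms of positive (resp. negative) discriminant form a
single orbit of `G⁺ = {g : det g > 0}` with representative `x₊` (resp. `x₋`); the stabilizer
of `x₊` in `G⁺` has order 3, and the stabilizer of `x₋` in `G⁺` is trivial. -/
theorem cubic_orbit_description :
    cubicDisc xplus = 1 ∧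
    cubicDisc xminus = -1 ∧
    (∀ x : Fin 4 → ℝ, 0 < cubicDisc x →
      ∃ g : Matrix (Fin 2) (Fin 2) ℝ, 0 < g.det ∧ x = cubicAct g xplus) ∧
    (∀ x : Fin 4 → ℝ, cubicDisc x < 0 →
      ∃ g : Matrix (Fin 2) (Fin 2) ℝ, 0 < g.det ∧ x = cubicAct g xminus) ∧
    Nat.card {g : Matrix (Fin 2) (Fin 2) ℝ // 0 < g.det ∧ cubicAct g xplus = xplus} = 3 ∧
    (∀ g : Matrix (Fin 2) (Fin 2) ℝ, 0 < g.det → cubicAct g xminus = xminus → g = 1) := by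
  refine ⟨disc_plus, disc_minus, ?_, ?_, ?_, fun g h1 h2 => stab_minus g h1 h2⟩
  · intro x hD
    obtain ⟨h, hdet, hlead⟩ := exists_leading x (ne_of_gt hD)
    have hD' : 0 < cubicDisc (cubicAct h x) := by
      rw [cubicDisc_act]
      exact mul_pos (Even.pow_pos ⟨3, by norm_num⟩ hdet) hD
    exact sign_fix xplus x J_fix_plus
      (orbit_transfer h hdet x xplus (orbit_pos_main _ hlead hD'))
  · intro x hD
    obtain ⟨h, hdet, hlead⟩ := exists_leading x (ne_of_lt hD)
    have hD' : cubicDisc (cubicAct h x) < 0 := by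
      rw [cubicDisc_act]
      exact mul_neg_of_pos_of_neg (Even.pow_pos ⟨3, by norm_num⟩ hdet) hD
    exact sign_fix xminus x J_fix_minus
      (orbit_transfer h hdet x xminus (orbit_neg_main _ hlead hD'))
  · have hiff : ∀ g : Matrix (Fin 2) (Fin 2) ℝ,
        (0 < g.det ∧ cubicAct g xplus = xplus) ↔
          g ∈ ({1, Matrix.of ![![(-1:ℝ)/2, -3/2], ![1/2, -1/2]],
            Matrix.of ![![(-1:ℝ)/2, 3/2], ![-1/2, -1/2]]} :
              Set (Matrix (Fin 2) (Fin 2) ℝ)) := by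
      intro g
      constructor
      · rintro ⟨h1, h2⟩
        have := stab_plus_fwd g h1 h2
        simpa [Set.mem_insert_iff, Set.mem_singleton_iff] using this
      · intro hmem
        simp only [Set.mem_insert_iff, Set.mem_singleton_iff] at hmem
        rcases hmem with rfl | rfl | rfl
        · exact ⟨by simp, cubicAct_one _⟩
        · refine ⟨by rw [Matrix.det_fin_two]; norm_num, act_g1⟩
        · refine ⟨by rw [Matrix.det_fin_two]; norm_num, act_g2⟩
    have hne01 : (1 : Matrix (Fin 2) (Fin 2) ℝ) ≠ Matrix.of ![![(-1:ℝ)/2, -3/2], ![1/2, -1/2]] := by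
      intro heq
      have := congrFun (congrFun heq 0) 0
      simp [Matrix.one_apply] at this
      norm_num at this
    have hne02 : (1 : Matrix (Fin 2) (Fin 2) ℝ) ≠ Matrix.of ![![(-1:ℝ)/2, 3/2], ![-1/2, -1/2]] := by
      intro heq
      have := congrFun (congrFun heq 0) 0
      simp [Matrix.one_apply] at this
      norm_num at this
    have hne12 : Matrix.of ![![(-1:ℝ)/2, -3/2], ![1/2, -1/2]]
        ≠ Matrix.of ![![(-1:ℝ)/2, 3/2], ![-1/2, -1/2]] := by
      intro heq
      have := congrFun (congrFun heq 0) 1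
      simp at this
      norm_num at this
    rw [Nat.card_congr (Equiv.subtypeEquivRight hiff), Nat.card_coe_set_eq,
      Set.ncard_insert_of_notMem (by
        intro hmem
        simp only [Set.mem_insert_iff, Set.mem_singleton_iff] at hmem
        rcases hmem with h | h
        · exact hne01 h
        · exact hne02 h)
        ((Set.finite_singleton _).insert _),
      Set.ncard_pair hne12]
end

section
/- Let G¹ = SL₂(ℝ) act on binary cubic forms by the twisted action, let w₁ = (0,0,1,0), w₂ = (0,0,0,1), and let N = {n_x : x ∈ ℝ} where n_x is the lower-triangular unipotent matrix with rows (1,0) and (x,1). Then the set S = {x ∈ ℝ⁴ : D(x) = 0} is the disjoint union S = {0} ⊔ G¹·w₁ ⊔ G¹·w₂; the stabilizer of w₁ in G¹ is trivial, and the stabilizer of w₂ in G¹ equals N. -/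
def w1 : Fin 4 → ℝ := ![0, 0, 1, 0]

def w2 : Fin 4 → ℝ := ![0, 0, 0, 1]

private lemma exists_cube_root (a : ℝ) : ∃ x : ℝ, x ^ 3 = a := by
  rcases le_total 0 a with h | h
  · refine ⟨a ^ ((3:ℝ)⁻¹), ?_⟩
    rw [← Real.rpow_natCast (a ^ ((3:ℝ)⁻¹)) 3, ← Real.rpow_mul h]
    norm_num
  · have h' : 0 ≤ -a := by linarith
    refine ⟨-((-a) ^ ((3:ℝ)⁻¹)), ?_⟩
    rw [show (-((-a) ^ ((3:ℝ)⁻¹)))^3 = -(((-a) ^ ((3:ℝ)⁻¹))^3) by ring,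
        ← Real.rpow_natCast ((-a) ^ ((3:ℝ)⁻¹)) 3, ← Real.rpow_mul h']
    norm_num

private lemma disc_act_w1 (g : Matrix (Fin 2) (Fin 2) ℝ) : cubicDisc (cubicAct g w1) = 0 := by
  simp [cubicDisc, cubicAct, w1]; ring

private lemma disc_act_w2 (g : Matrix (Fin 2) (Fin 2) ℝ) : cubicDisc (cubicAct g w2) = 0 := by
  simp [cubicDisc, cubicAct, w2]; ring

private lemma part2 (g : Matrix (Fin 2) (Fin 2) ℝ) (hg : g.det = 1) : cubicAct g w1 ≠ 0 := by
  rw [Matrix.det_fin_two] at hg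
  intro h
  have e0 := congrFun h 0
  have e1 := congrFun h 1
  have e2 := congrFun h 2
  have e3 := congrFun h 3
  simp [cubicAct, w1] at e0 e1 e2 e3
  rcases e0 with h00 | h01
  · have e1' : g 1 0 * g 0 1 ^ 2 = 0 := by linear_combination e1 - 2 * g 0 1 * g 1 1 * h00
    rcases mul_eq_zero.mp e1' with h10 | h01
    · rw [h00, h10] at hg; norm_num at hg
    · have h01 : g 0 1 = 0 := pow_eq_zero_iff two_ne_zero |>.mp h01
      rw [h00, h01] at hg; norm_num at hg
  · have e2' : (g 0 0 * g 1 1) * g 1 1 = 0 := by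
      linear_combination e2 - 2 * g 1 0 * g 1 1 * h01
    rcases mul_eq_zero.mp e2' with h1 | h11
    · rw [h01] at hg
      rw [h1] at hg; norm_num at hg
    · rw [h01, h11] at hg; norm_num at hg

private lemma part3 (g : Matrix (Fin 2) (Fin 2) ℝ) (hg : g.det = 1) : cubicAct g w2 ≠ 0 := by
  rw [Matrix.det_fin_two] at hg
  intro h
  have e0 := congrFun h 0
  have e3 := congrFun h 3
  simp [cubicAct, w2] at e0 e3
  rw [e0, e3] at hg; norm_num at hg

private lemma part4 (g h : Matrix (Fin 2) (Fin 2) ℝ) (hg : g.det = 1) (_hh : h.det = 1) :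
    cubicAct g w1 ≠ cubicAct h w2 := by
  rw [Matrix.det_fin_two] at hg
  intro heq
  have e0 := congrFun heq 0
  have e1 := congrFun heq 1
  have e2 := congrFun heq 2
  have e3 := congrFun heq 3
  simp [cubicAct, w1, w2] at e0 e1 e2 e3
  have h01 : g 0 1 = 0 := by
    refine pow_eq_zero_iff two_ne_zero |>.mp ?_
    linear_combination (2 * g 0 0 * g 0 1 * g 1 1 + g 1 0 * g 0 1 ^ 2 + 3 * h 0 1 ^ 2 * h 1 1) * e1
      - 3 * (g 0 0 * g 1 1 ^ 2 + 2 * g 1 0 * g 0 1 * g 1 1) * e0 - 3 * h 0 1 ^ 3 * e2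
      - g 0 1 ^ 2 * ((g 0 0 * g 1 1 - g 0 1 * g 1 0) + 1) * hg
  have h11 : g 1 1 = 0 := by
    refine pow_eq_zero_iff two_ne_zero |>.mp ?_
    linear_combination (g 0 0 * g 1 1 ^ 2 + 2 * g 1 0 * g 0 1 * g 1 1 + 3 * h 0 1 * h 1 1 ^ 2) * e2
      - 3 * (g 1 0 * g 1 1 ^ 2) * e1 - 3 * (3 * h 0 1 ^ 2 * h 1 1) * e3
      - g 1 1 ^ 2 * ((g 0 0 * g 1 1 - g 0 1 * g 1 0) + 1) * hg
  rw [h01, h11] at hg; norm_num at hg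

private lemma part5 (g : Matrix (Fin 2) (Fin 2) ℝ) (hg : g.det = 1)
    (h : cubicAct g w1 = w1) : g = 1 := by
  rw [Matrix.det_fin_two] at hg
  have e0 := congrFun h 0
  have e1 := congrFun h 1
  have e2 := congrFun h 2
  have e3 := congrFun h 3
  simp [cubicAct, w1] at e0 e1 e2 e3
  rcases e0 with h00 | h01
  · exfalso
    have e1' : g 1 0 * g 0 1 ^ 2 = 0 := by linear_combination e1 - 2 * g 0 1 * g 1 1 * h00
    rcases mul_eq_zero.mp e1' with h10 | h01
    · rw [h00, h10] at hg; norm_num at hg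
    · have h01 : g 0 1 = 0 := pow_eq_zero_iff two_ne_zero |>.mp h01
      rw [h00, h01] at hg; norm_num at hg
  · rcases e3 with h10 | h11
    · have h11 : g 1 1 = 1 := by
        linear_combination e2 - g 1 1 * hg - 3 * g 1 0 * g 1 1 * h01
      have h00 : g 0 0 = 1 := by
        linear_combination hg - g 0 0 * h11 + g 1 0 * h01
      rw [show g = !![g 0 0, g 0 1; g 1 0, g 1 1] from (Matrix.etaExpand_eq g).symm,
        h00, h01, h10, h11, Matrix.one_fin_two]
    · exfalso; rw [h01, h11] at hg; norm_num at hg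

private lemma part6 (g : Matrix (Fin 2) (Fin 2) ℝ) (hg : g.det = 1) :
    cubicAct g w2 = w2 ↔ ∃ x : ℝ, g = !![1, 0; x, 1] := by
  rw [Matrix.det_fin_two] at hg
  constructor
  · intro h
    have e0 := congrFun h 0
    have e3 := congrFun h 3
    simp [cubicAct, w2] at e0 e3
    have h11 : g 1 1 = 1 := by nlinarith [e3, sq_nonneg (g 1 1 - 1), sq_nonneg (g 1 1 + 1)]
    have h00 : g 0 0 = 1 := by linear_combination hg - g 0 0 * h11 + g 1 0 * e0
    obtain ⟨t, ht⟩ : ∃ t, g 1 0 = t := ⟨_, rfl⟩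
    refine ⟨t, ?_⟩
    rw [show g = !![g 0 0, g 0 1; g 1 0, g 1 1] from (Matrix.etaExpand_eq g).symm,
      h00, e0, h11, ht]
  · rintro ⟨x, rfl⟩
    funext i
    fin_cases i <;> simp [cubicAct, w2]

private lemma part1 (x : Fin 4 → ℝ) (hD : cubicDisc x = 0) :
    (x = 0 ∨ (∃ g : Matrix (Fin 2) (Fin 2) ℝ, g.det = 1 ∧ x = cubicAct g w1) ∨
        (∃ g : Matrix (Fin 2) (Fin 2) ℝ, g.det = 1 ∧ x = cubicAct g w2)) := by
  obtain ⟨a, b, c, d, rfl⟩ : ∃ a b c d : ℝ, x = ![a,b,c,d] :=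
    ⟨x 0, x 1, x 2, x 3, by funext i; fin_cases i <;> rfl⟩
  simp only [cubicDisc, Matrix.cons_val_zero, Matrix.cons_val_one, Matrix.head_cons,
    Matrix.cons_val_two, Matrix.tail_cons, Matrix.cons_val_three] at hD
  by_cases hΔ : b^2 - 3*a*c = 0
  · by_cases ha : a = 0
    · have hb : b = 0 := by
        have h2 : b^2 = 0 := by linear_combination hΔ + 3*c*ha
        exact pow_eq_zero_iff two_ne_zero |>.mp h2
      by_cases hc : c = 0
      · by_cases hd : d = 0
        · left; funext i; fin_cases i <;> simp [ha, hb, hc, hd]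
        · right; right
          obtain ⟨δ, hδ⟩ := exists_cube_root d
          have hδ0 : δ ≠ 0 := fun h => hd (by rw [← hδ, h]; ring)
          refine ⟨!![1/δ, 0; 0, δ], ?_, ?_⟩
          · rw [Matrix.det_fin_two_of]; field_simp; ring
          · funext i; fin_cases i <;> simp [cubicAct, w2, ha, hb, hc, hδ]
      · right; left
        refine ⟨!![1/c, 0; d/c^2, c], ?_, ?_⟩
        · rw [Matrix.det_fin_two_of]; field_simp; ring
        · funext i; fin_cases i
          · simpa [cubicAct, w1] using ha
          · simpa [cubicAct, w1] using hb
          · simp [cubicAct, w1]; field_simp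
          · simp [cubicAct, w1]; field_simp
    · have hΔ1 : 2*b^3 - 9*a*b*c + 27*a^2*d = 0 := by
        refine pow_eq_zero_iff two_ne_zero |>.mp ?_
        linear_combination 4*(b^2 - 3*a*c)^2 * hΔ - 27*a^2*hD
      obtain ⟨α, hα⟩ := exists_cube_root a
      have hα0 : α ≠ 0 := fun h => ha (by rw [← hα, h]; ring)
      right; right
      refine ⟨!![0, α; -(1/α), b/(3*α^2)], ?_, ?_⟩
      · rw [Matrix.det_fin_two_of]; field_simp; ring
      · funext i; fin_cases i
        · simp [cubicAct, w2]; linear_combination -hα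
        · simp [cubicAct, w2]; field_simp
        · simp [cubicAct, w2]; field_simp
          linear_combination 3*c*hα - hΔ
        · simp [cubicAct, w2]; field_simp
          linear_combination 27*d*(α^3+a)*hα + hΔ1 - 3*b*hΔ
  · right; left
    have hΔ' : b^2 - a*3*c ≠ 0 := by intro h; apply hΔ; linarith
    have hΔ'' : b^2 - c*a*3 ≠ 0 := by intro h; apply hΔ; linarith
    have hΔ''' : b^2 - a*c*3 ≠ 0 := by intro h; apply hΔ; linarith
    refine ⟨!![a/(b^2-3*a*c), -(2*b^3 - 9*a*b*c + 27*a^2*d)/(2*(b^2-3*a*c));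
        (b^3 + 9*a^2*d - 4*a*b*c)/(b^2-3*a*c)^2,
        (2*b^3 - 9*a*b*c + 27*a^2*d)*(9*a*d - b*c)/(4*(b^2-3*a*c)^2)], ?_, ?_⟩
    · rw [Matrix.det_fin_two_of]; field_simp
      linear_combination ((-54)*a^2) * hD
    · funext i; fin_cases i
      · simp [cubicAct, w1]; field_simp
        linear_combination 27*a^3*hD
      · simp [cubicAct, w1]; field_simp
        linear_combination ((-324)*a^3*b*c + (108)*a^2*b^3) * hD
      · simp [cubicAct, w1]; field_simp
        linear_combination ((-6561)*a^5*d^2 + (4374)*a^4*b*c*d + (972)*a^4*c^3 + (-972)*a^3*b^3*d + (-1377)*a^3*b^2*c^2 + (432)*a^2*b^4*c + (-36)*a*b^6) * hD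
      · simp [cubicAct, w1]; field_simp
        linear_combination ((19683)*a^6*d^3 + (-13122)*a^5*b*c*d^2 + (-2916)*a^5*c^3*d
          + (2187)*a^4*b^3*d^2 + (5103)*a^4*b^2*c^2*d + (-1458)*a^3*b^4*c*d + (108)*a^2*b^6*d
          + (-81)*a^2*b^5*c^2 + (36)*a*b^7*c + (-4)*b^9) * hD

/-- The singular set `S = {D = 0}` is the disjoint union `{0} ⊔ G¹·w₁ ⊔ G¹·w₂` for the
action of `G¹ = SL₂(ℝ)`; the stabilizer of `w₁` in `G¹` is trivial and the stabilizer of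
`w₂` in `G¹` is the group `N` of lower-triangular unipotent matrices. -/
theorem singular_set_description :
    (∀ x : Fin 4 → ℝ, cubicDisc x = 0 ↔
      (x = 0 ∨ (∃ g : Matrix (Fin 2) (Fin 2) ℝ, g.det = 1 ∧ x = cubicAct g w1) ∨
        (∃ g : Matrix (Fin 2) (Fin 2) ℝ, g.det = 1 ∧ x = cubicAct g w2))) ∧
    (∀ g : Matrix (Fin 2) (Fin 2) ℝ, g.det = 1 → cubicAct g w1 ≠ 0) ∧
    (∀ g : Matrix (Fin 2) (Fin 2) ℝ, g.det = 1 → cubicAct g w2 ≠ 0) ∧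
    (∀ g h : Matrix (Fin 2) (Fin 2) ℝ, g.det = 1 → h.det = 1 →
      cubicAct g w1 ≠ cubicAct h w2) ∧
    (∀ g : Matrix (Fin 2) (Fin 2) ℝ, g.det = 1 → cubicAct g w1 = w1 → g = 1) ∧
    (∀ g : Matrix (Fin 2) (Fin 2) ℝ, g.det = 1 →
      (cubicAct g w2 = w2 ↔ ∃ x : ℝ, g = !![1, 0; x, 1])) := by
  refine ⟨fun x => ⟨part1 x, ?_⟩, part2, part3, part4, part5, part6⟩
  rintro (rfl | ⟨g, hg, rfl⟩ | ⟨g, hg, rfl⟩)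
  · simp [cubicDisc]
  · exact disc_act_w1 g
  · exact disc_act_w2 g
end

section
/- Let ρ : ℤ∖{0} → ℂ and C > 0 satisfy ∑_{0<|n|≤X} |ρ(n)| ≤ C·X for all real X ≥ 1. Then for every ε > 0 there exists a constant C′ depending only on C and ε such that for every sign ε₁ ∈ {+1,−1}, every integer q ≥ 1, and every complex number x with Re(x) ≥ ε, the double series ∑_{ℓ,m≥1} ρ(ε₁·3ℓmq) · ℓ^{−(1+x)} · (3mq)^{−(1+3x)} converges absolutely and its absolute value is at most C′. -/
open Finset

lemma divisor_bound (δ : ℝ) (hδ : 0 < δ) :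
    ∃ K : ℝ, 1 ≤ K ∧ ∀ n : ℕ, n ≠ 0 → (n.divisors.card : ℝ) ≤ K * (n : ℝ) ^ δ := by
  have hlog2 : (0:ℝ) < Real.log 2 := Real.log_pos (by norm_num)
  set K₀ : ℝ := max 1 (1 / (δ * Real.log 2)) with hK₀
  have hK₀1 : 1 ≤ K₀ := le_max_left _ _
  set B : ℕ := ⌈(2:ℝ) ^ (1/δ)⌉₊ with hB
  refine ⟨K₀ ^ (B + 1), one_le_pow₀ hK₀1, ?_⟩
  intro n hn
  -- per-prime bounds
  have fact1 : ∀ p : ℕ, p.Prime → ∀ a : ℕ, (a + 1 : ℝ) ≤ K₀ * (p:ℝ) ^ ((a:ℝ) * δ) := by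
    intro p hp a
    have h2p : (2:ℝ) ≤ (p:ℝ) := by exact_mod_cast hp.two_le
    have hexp : (0:ℝ) ≤ (a:ℝ) * δ := by positivity
    have h1 : (2:ℝ) ^ ((a:ℝ) * δ) ≤ (p:ℝ) ^ ((a:ℝ)*δ) :=
      Real.rpow_le_rpow (by norm_num) h2p hexp
    have h2 : (a:ℝ) * δ * Real.log 2 + 1 ≤ (2:ℝ) ^ ((a:ℝ)*δ) := by
      rw [Real.rpow_def_of_pos (by norm_num)]
      calc (a:ℝ) * δ * Real.log 2 + 1 ≤ Real.exp ((a:ℝ)*δ*Real.log 2) := Real.add_one_le_exp _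
        _ = Real.exp (Real.log 2 * ((a:ℝ)*δ)) := by ring_nf
    have hK₀2 : 1 / (δ * Real.log 2) ≤ K₀ := le_max_right _ _
    have hK₀3 : 1 ≤ K₀ * (δ * Real.log 2) := by
      rw [div_le_iff₀ (by positivity)] at hK₀2
      linarith
    have hKnn : (0:ℝ) ≤ K₀ := by linarith
    calc (a + 1 : ℝ) ≤ K₀ * ((a:ℝ) * δ * Real.log 2 + 1) := by nlinarith [Nat.cast_nonneg (α := ℝ) a]
      _ ≤ K₀ * ((2:ℝ) ^ ((a:ℝ)*δ)) := by nlinarith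
      _ ≤ K₀ * (p:ℝ) ^ ((a:ℝ)*δ) := by nlinarith [Real.rpow_nonneg (show (0:ℝ) ≤ 2 by norm_num) ((a:ℝ)*δ)]
  have fact2 : ∀ p : ℕ, p.Prime → B < p → ∀ a : ℕ, (a + 1 : ℝ) ≤ (p:ℝ) ^ ((a:ℝ) * δ) := by
    intro p hp hBp a
    have h1 : (2:ℝ) ^ (1/δ) ≤ (p:ℝ) := by
      calc (2:ℝ) ^ (1/δ) ≤ (B:ℝ) := Nat.le_ceil _
        _ ≤ (p:ℝ) := by exact_mod_cast hBp.le
    have hpnn : (0:ℝ) ≤ (p:ℝ) := Nat.cast_nonneg _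
    have h2 : (2:ℝ) ≤ (p:ℝ) ^ δ := by
      have := Real.rpow_le_rpow (Real.rpow_nonneg (by norm_num) _) h1 hδ.le
      rwa [← Real.rpow_mul (by norm_num), one_div, inv_mul_cancel₀ hδ.ne', Real.rpow_one] at this
    have h3 : (p:ℝ) ^ ((a:ℝ) * δ) = ((p:ℝ) ^ δ) ^ a := by
      rw [mul_comm, Real.rpow_mul hpnn, Real.rpow_natCast]
    rw [h3]
    calc (a + 1 : ℝ) ≤ (2:ℝ) ^ a := by exact_mod_cast Nat.lt_two_pow_self (n := a)
      _ ≤ ((p:ℝ) ^ δ) ^ a := pow_le_pow_left₀ (by norm_num) h2 a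
  -- main chain
  have hcard : (n.divisors.card : ℝ) = ∏ p ∈ n.primeFactors, ((n.factorization p + 1 : ℕ) : ℝ) := by
    rw [Nat.card_divisors hn]; push_cast; ring
  have hn' : (n:ℝ) ^ δ = ∏ p ∈ n.primeFactors, (p:ℝ) ^ ((n.factorization p : ℝ) * δ) := by
    conv_lhs => rw [← Nat.factorization_prod_pow_eq_self hn]
    rw [Finsupp.prod, Nat.support_factorization]
    push_cast
    rw [← Real.finset_prod_rpow _ _ (fun p _ => by positivity) δ]
    exact Finset.prod_congr rfl fun p _ => by
      rw [← Real.rpow_natCast (p:ℝ) (n.factorization p), ← Real.rpow_mul (Nat.cast_nonneg _)]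
  rw [hcard, hn']
  have step1 : ∏ p ∈ n.primeFactors, ((n.factorization p + 1 : ℕ) : ℝ) ≤
      ∏ p ∈ n.primeFactors, ((if p ≤ B then K₀ else 1) * (p:ℝ) ^ ((n.factorization p : ℝ) * δ)) := by
    apply Finset.prod_le_prod (fun p _ => by positivity)
    intro p hp
    have hpp : p.Prime := Nat.prime_of_mem_primeFactors hp
    by_cases h : p ≤ B
    · simp only [h, if_true]; push_cast; exact fact1 p hpp _
    · simp only [h, if_false, one_mul]; push_cast
      exact fact2 p hpp (lt_of_not_ge h) _
  refine step1.trans ?_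
  rw [Finset.prod_mul_distrib]
  have hprod_ite : (∏ p ∈ n.primeFactors, (if p ≤ B then K₀ else 1)) ≤ K₀ ^ (B + 1) := by
    rw [Finset.prod_ite, Finset.prod_const, Finset.prod_const, one_pow, mul_one]
    apply pow_le_pow_right₀ hK₀1
    calc (n.primeFactors.filter (· ≤ B)).card ≤ (Finset.range (B+1)).card := by
          apply Finset.card_le_card
          intro p hp
          simp only [Finset.mem_filter] at hp
          exact Finset.mem_range.2 (Nat.lt_succ_of_le hp.2)
      _ = B + 1 := Finset.card_range _
  have hpos : (0:ℝ) ≤ ∏ p ∈ n.primeFactors, (p:ℝ) ^ ((n.factorization p : ℝ) * δ) :=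
    Finset.prod_nonneg fun p _ => by positivity
  exact mul_le_mul_of_nonneg_right hprod_ite hpos |>.trans_eq rfl

lemma abel_maj (C : ℝ) (b w : ℕ → ℝ) (hb : ∀ n, 0 ≤ b n)
    (hB : ∀ N : ℕ, ∑ n ∈ Finset.range N, b (n+1) ≤ C * N)
    (hw0 : ∀ n, 0 ≤ w n) (hw : ∀ n, w (n+2) ≤ w (n+1)) (N : ℕ) :
    ∑ n ∈ Finset.range N, b (n+1) * w (n+1) ≤ C * ∑ n ∈ Finset.range N, w (n+1) := by
  have key : ∀ N : ℕ, ∑ n ∈ Finset.range N, b (n+1) * w (n+1)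
      + (C * N - ∑ n ∈ Finset.range N, b (n+1)) * w N
      ≤ C * ∑ n ∈ Finset.range N, w (n+1) := by
    intro N
    induction N with
    | zero => simp
    | succ N ih =>
      rw [Finset.sum_range_succ, Finset.sum_range_succ, Finset.sum_range_succ (f := fun n => w (n+1))]
      have hmono : (C * N - ∑ n ∈ Finset.range N, b (n+1)) * w (N+1)
          ≤ (C * N - ∑ n ∈ Finset.range N, b (n+1)) * w N := by
        cases N with
        | zero => simp
        | succ M =>
          exact mul_le_mul_of_nonneg_left (hw M) (by linarith [hB (M+1)])
      push_cast
      nlinarith [hw0 (N+1), hb (N+1)]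
  have h := key N
  have h2 : 0 ≤ (C * N - ∑ n ∈ Finset.range N, b (n+1)) * w N :=
    mul_nonneg (by linarith [hB N]) (hw0 N)
  linarith

/-- If `ρ : ℤ∖{0} → ℂ` satisfies `∑_{0<|n|≤X} |ρ(n)| ≤ C·X` for all `X ≥ 1`, then for every
`ε > 0` there is `C′ = C′(C,ε)` such that for every sign `ε₁ = ±1`, every `q ≥ 1` and every
complex `x` with `Re x ≥ ε`, the double series
`∑_{ℓ,m ≥ 1} ρ(ε₁·3ℓmq) ℓ^{-(1+x)} (3mq)^{-(1+3x)}` converges absolutely with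
`|sum| ≤ C′`. -/
theorem dirichlet_series_bound (C : ℝ) (hC : 0 < C) (ε : ℝ) (hε : 0 < ε) :
    ∃ C' : ℝ, ∀ ρ : ℤ → ℂ,
      (∀ X : ℝ, 1 ≤ X → ∑ n ∈ (Finset.Icc (-⌊X⌋) ⌊X⌋).erase 0, ‖ρ n‖ ≤ C * X) →
      ∀ ε₁ : ℤ, (ε₁ = 1 ∨ ε₁ = -1) → ∀ q : ℕ, 1 ≤ q → ∀ x : ℂ, ε ≤ x.re →
        Summable (fun lm : ℕ × ℕ =>
          ‖ρ (ε₁ * 3 * ((lm.1 : ℤ) + 1) * ((lm.2 : ℤ) + 1) * (q : ℤ)) *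
            (((lm.1 : ℕ) + 1 : ℂ)) ^ (-(1 + x)) *
            (((3 * (lm.2 + 1) * q : ℕ) : ℂ)) ^ (-(1 + 3 * x))‖) ∧
        ‖∑' lm : ℕ × ℕ,
          ρ (ε₁ * 3 * ((lm.1 : ℤ) + 1) * ((lm.2 : ℤ) + 1) * (q : ℤ)) *
            (((lm.1 : ℕ) + 1 : ℂ)) ^ (-(1 + x)) *
            (((3 * (lm.2 + 1) * q : ℕ) : ℂ)) ^ (-(1 + 3 * x))‖ ≤ C' := by
  obtain ⟨Kd, hKd1, hKdiv⟩ := divisor_bound (ε/2) (half_pos hε)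
  -- the weight function and its tail sum
  set w : ℕ → ℝ := fun n => (n:ℝ) ^ (-(1+ε/2)) with hw_def
  have hw_summable : Summable w := Real.summable_nat_rpow.2 (by linarith)
  set K₂ : ℝ := ∑' n : ℕ, w n with hK₂
  have hw0 : ∀ n, 0 ≤ w n := fun n => Real.rpow_nonneg (Nat.cast_nonneg n) _
  have hwmono : ∀ n : ℕ, w (n+2) ≤ w (n+1) := by
    intro n
    have h1 : (0:ℝ) < ((n:ℝ)+1) := by positivity
    simp only [hw_def]
    rw [Real.rpow_neg (by positivity), Real.rpow_neg (by positivity)]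
    push_cast
    apply inv_anti₀ (Real.rpow_pos_of_pos h1 _)
    exact Real.rpow_le_rpow (by positivity) (by linarith) (by positivity)
  have hWsum : ∀ M : ℕ, ∑ n ∈ Finset.range M, w (n+1) ≤ K₂ := by
    intro M
    have h0 : w 0 = 0 := by
      simp only [hw_def, Nat.cast_zero]
      exact Real.zero_rpow (by linarith)
    have : ∑ n ∈ Finset.range M, w (n+1) = ∑ n ∈ Finset.range (M+1), w n := by
      rw [Finset.sum_range_succ' w M, h0, add_zero]
    rw [this]
    exact Summable.sum_le_tsum _ (fun n _ => hw0 n) hw_summable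
  refine ⟨Kd * (C * K₂), ?_⟩
  intro ρ hρ ε₁ hε₁ q hq x hx
  have hε₁0 : ε₁ ≠ 0 := by rcases hε₁ with h | h <;> simp [h]
  set b : ℕ → ℝ := fun n => ‖ρ (ε₁ * n)‖ with hb_def
  have hb0 : ∀ n, 0 ≤ b n := fun n => norm_nonneg _
  set f : ℕ × ℕ → ℕ := fun p => 3 * (p.1+1) * (p.2+1) * q with hf_def
  have hfpos : ∀ p : ℕ × ℕ, 0 < f p := fun p => by
    simp only [hf_def]; positivity
  -- partial sum hypothesis for b
  have hBsum : ∀ N : ℕ, ∑ n ∈ Finset.range N, b (n+1) ≤ C * N := by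
    intro N
    rcases Nat.eq_zero_or_pos N with h | h
    · simp [h]
    have hN1 : (1:ℝ) ≤ (N:ℝ) := by exact_mod_cast h
    have hmain := hρ (N:ℝ) hN1
    rw [Int.floor_natCast] at hmain
    set g : ℕ → ℤ := fun n => ε₁ * ((n:ℤ)+1) with hg
    have hsum_eq : ∑ n ∈ Finset.range N, b (n+1) = ∑ j ∈ (Finset.range N).image g, ‖ρ j‖ := by
      rw [Finset.sum_image]
      · apply Finset.sum_congr rfl
        intro n _
        simp only [hb_def, hg]
        norm_cast
      · intro a _ c _ hac
        simp only [hg] at hac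
        have := mul_left_cancel₀ hε₁0 hac
        omega
    rw [hsum_eq]
    refine le_trans (Finset.sum_le_sum_of_subset_of_nonneg ?_ (fun _ _ _ => norm_nonneg _)) hmain
    intro j hj
    simp only [Finset.mem_image, Finset.mem_range] at hj
    obtain ⟨n, hn, rfl⟩ := hj
    simp only [Finset.mem_erase, Finset.mem_Icc, hg]
    rcases hε₁ with h1 | h1 <;> (subst h1; constructor)
    · omega
    · omega
    · omega
    · omega
  -- pointwise bound
  set h : ℕ → ℝ := fun n => b n * (n:ℝ) ^ (-(1+ε)) with hh_def
  have hh0 : ∀ n, 0 ≤ h n := fun n => mul_nonneg (hb0 n) (Real.rpow_nonneg (Nat.cast_nonneg n) _)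
  set T : (ℕ × ℕ) → ℂ := fun lm =>
    ρ (ε₁ * 3 * ((lm.1 : ℤ) + 1) * ((lm.2 : ℤ) + 1) * (q : ℤ)) *
      (((lm.1 : ℕ) + 1 : ℂ)) ^ (-(1 + x)) *
      (((3 * (lm.2 + 1) * q : ℕ) : ℂ)) ^ (-(1 + 3 * x)) with hT_def
  have hpoint : ∀ p : ℕ × ℕ, ‖T p‖ ≤ h (f p) := by
    intro p
    have harg : ε₁ * 3 * ((p.1 : ℤ) + 1) * ((p.2 : ℤ) + 1) * (q : ℤ) = ε₁ * (f p : ℤ) := by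
      simp only [hf_def]; push_cast; ring
    have hb1 : (((p.1 : ℕ) + 1 : ℂ)) = ((p.1 + 1 : ℕ) : ℂ) := by push_cast; ring
    have hn1 : ‖((p.1 + 1 : ℕ) : ℂ) ^ (-(1+x))‖ = ((p.1+1 : ℕ) : ℝ) ^ (-(1+x)).re :=
      Complex.norm_natCast_cpow_of_pos (Nat.succ_pos _) _
    have hn2 : ‖((3 * (p.2 + 1) * q : ℕ) : ℂ) ^ (-(1+3*x))‖
        = ((3 * (p.2+1) * q : ℕ) : ℝ) ^ (-(1+3*x)).re :=
      Complex.norm_natCast_cpow_of_pos (by positivity) _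
    have hre1 : (-(1+x)).re = -(1+x.re) := by simp
    have hre2 : (-(1+3*x)).re = -(1+3*x.re) := by simp
    simp only [hT_def, harg, hb1, norm_mul, hn1, hn2, hre1, hre2]
    have hA1 : (1:ℝ) ≤ ((p.1+1 : ℕ) : ℝ) := by exact_mod_cast Nat.succ_le_succ (Nat.zero_le _)
    have hB1 : (1:ℝ) ≤ ((3 * (p.2+1) * q : ℕ) : ℝ) := by
      have : 1 ≤ 3 * (p.2+1) * q := Nat.one_le_iff_ne_zero.mpr (by positivity)
      exact_mod_cast this
    have e1 : ((p.1+1 : ℕ) : ℝ) ^ (-(1+x.re)) ≤ ((p.1+1 : ℕ) : ℝ) ^ (-(1+ε)) :=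
      Real.rpow_le_rpow_of_exponent_le hA1 (by linarith)
    have e2 : ((3 * (p.2+1) * q : ℕ) : ℝ) ^ (-(1+3*x.re)) ≤ ((3 * (p.2+1) * q : ℕ) : ℝ) ^ (-(1+ε)) :=
      Real.rpow_le_rpow_of_exponent_le hB1 (by linarith)
    have hprod : ((p.1+1 : ℕ) : ℝ) ^ (-(1+ε)) * ((3 * (p.2+1) * q : ℕ) : ℝ) ^ (-(1+ε))
        = ((f p : ℕ) : ℝ) ^ (-(1+ε)) := by
      rw [← Real.mul_rpow (by positivity) (by positivity)]
      congr 1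
      simp only [hf_def]
      push_cast
      ring
    simp only [hh_def, hb_def]
    calc ‖ρ (ε₁ * (f p : ℤ))‖ * ((p.1+1 : ℕ) : ℝ) ^ (-(1+x.re)) * ((3 * (p.2+1) * q : ℕ) : ℝ) ^ (-(1+3*x.re))
        ≤ ‖ρ (ε₁ * (f p : ℤ))‖ * ((p.1+1 : ℕ) : ℝ) ^ (-(1+ε)) * ((3 * (p.2+1) * q : ℕ) : ℝ) ^ (-(1+ε)) := by
          apply mul_le_mul
          · exact mul_le_mul_of_nonneg_left e1 (norm_nonneg _)
          · exact e2
          · positivity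
          · positivity
      _ = ‖ρ (ε₁ * (f p : ℤ))‖ * ((f p : ℕ) : ℝ) ^ (-(1+ε)) := by rw [mul_assoc, hprod]
  -- finite sums of h ∘ f are bounded
  have hfin : ∀ S : Finset (ℕ × ℕ), ∑ p ∈ S, h (f p) ≤ Kd * (C * K₂) := by
    intro S
    rw [Finset.sum_comp h f]
    -- fiber cards bounded by divisor counts
    have hfiber : ∀ n ∈ S.image f, ((S.filter (fun p => f p = n)).card : ℝ) ≤ (n.divisors.card : ℝ) := by
      intro n hn
      simp only [Finset.mem_image] at hn
      obtain ⟨p₀, _, hp₀⟩ := hn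
      have hn0 : n ≠ 0 := by rw [← hp₀]; exact (hfpos p₀).ne'
      have : (S.filter (fun p => f p = n)).card ≤ n.divisors.card := by
        apply Finset.card_le_card_of_injOn (fun p => p.1 + 1)
        · intro p hp
          simp only [Finset.mem_coe, Finset.mem_filter] at hp
          refine Nat.mem_divisors.2 ⟨⟨3 * (p.2 + 1) * q, ?_⟩, hn0⟩
          rw [← hp.2]; simp only [hf_def]; ring
        · intro p₁ hp₁ p₂ hp₂ hpp
          simp only [Finset.coe_filter, Set.mem_setOf_eq] at hp₁ hp₂
          have h1 : p₁.1 = p₂.1 := by simpa using hpp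
          have h2 : p₁.2 = p₂.2 := by
            have heq := hp₁.2.trans hp₂.2.symm
            simp only [hf_def, h1] at heq
            have hq0 : 0 < q := hq
            have h3 : 0 < 3 * (p₂.1 + 1) := by positivity
            have := Nat.eq_of_mul_eq_mul_left h3 (Nat.eq_of_mul_eq_mul_right hq0 heq)
            omega
          exact Prod.ext h1 h2
      exact_mod_cast this
    calc ∑ n ∈ S.image f, (S.filter (fun p => f p = n)).card • h n
        ≤ ∑ n ∈ S.image f, Kd * (b n * (n:ℝ) ^ (-(1+ε/2))) := by
          apply Finset.sum_le_sum
          intro n hn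
          rw [nsmul_eq_mul]
          have hn0 : n ≠ 0 := by
            simp only [Finset.mem_image] at hn
            obtain ⟨p₀, _, hp₀⟩ := hn
            rw [← hp₀]; exact (hfpos p₀).ne'
          have hnpos : (0:ℝ) < (n:ℝ) := by exact_mod_cast Nat.pos_of_ne_zero hn0
          have hd := hKdiv n hn0
          have step : ((S.filter (fun p => f p = n)).card : ℝ) * h n ≤ (Kd * (n:ℝ)^(ε/2)) * h n := by
            apply mul_le_mul_of_nonneg_right ((hfiber n hn).trans hd) (hh0 n)
          refine step.trans (le_of_eq ?_)
          simp only [hh_def]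
          rw [show (Kd * (n:ℝ)^(ε/2)) * (b n * (n:ℝ) ^ (-(1+ε))) =
            Kd * (b n * ((n:ℝ)^(ε/2) * (n:ℝ) ^ (-(1+ε)))) by ring]
          congr 2
          rw [← Real.rpow_add hnpos]
          congr 1
          ring
      _ = Kd * ∑ n ∈ S.image f, (b n * (n:ℝ) ^ (-(1+ε/2))) := by rw [Finset.mul_sum]
      _ ≤ Kd * (C * K₂) := by
          apply mul_le_mul_of_nonneg_left _ (by linarith : (0:ℝ) ≤ Kd)
          set u : ℕ → ℝ := fun n => b n * (n:ℝ) ^ (-(1+ε/2)) with hu_def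
          have hu0 : ∀ n, 0 ≤ u n := fun n => mul_nonneg (hb0 n) (Real.rpow_nonneg (Nat.cast_nonneg n) _)
          set M : ℕ := (S.image f).sup id with hM
          have hsub : S.image f ⊆ Finset.range (M + 1) := by
            intro n hn
            exact Finset.mem_range.2 (Nat.lt_succ_of_le (Finset.le_sup (f := id) hn))
          calc ∑ n ∈ S.image f, u n ≤ ∑ n ∈ Finset.range (M+1), u n :=
                Finset.sum_le_sum_of_subset_of_nonneg hsub (fun n _ _ => hu0 n)
            _ = ∑ n ∈ Finset.range M, u (n+1) := by
                rw [Finset.sum_range_succ' u M]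
                have : u 0 = 0 := by
                  simp only [hu_def, Nat.cast_zero]
                  rw [Real.zero_rpow (by linarith)]
                  ring
                rw [this, add_zero]
            _ = ∑ n ∈ Finset.range M, b (n+1) * w (n+1) := rfl
            _ ≤ C * ∑ n ∈ Finset.range M, w (n+1) := abel_maj C b w hb0 hBsum hw0 hwmono M
            _ ≤ C * K₂ := mul_le_mul_of_nonneg_left (hWsum M) hC.le
  -- conclude
  have hsummable : Summable (fun p : ℕ × ℕ => ‖T p‖) := by
    apply summable_of_sum_le (fun p => norm_nonneg (T p))
    intro u
    exact le_trans (Finset.sum_le_sum (fun p _ => hpoint p)) (hfin u)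
  refine ⟨hsummable, ?_⟩
  calc ‖∑' p : ℕ × ℕ, T p‖ ≤ ∑' p : ℕ × ℕ, ‖T p‖ := norm_tsum_le_tsum_norm hsummable
    _ ≤ Kd * (C * K₂) := Summable.tsum_le_of_sum_le hsummable
        (fun s => le_trans (Finset.sum_le_sum (fun p _ => hpoint p)) (hfin s))
end

section
/- For every ε with 0 < ε < 1/2 there exists a constant C = C(ε) such that for every complex number w with ε ≤ Re(w) ≤ 1 − ε and each sign s ∈ {+1,−1}: |Γ(1−w) · (cos(π(1−w)/2) + i·s·sin(π(1−w)/2))| ≤ C · |w|^{1/2 − Re(w)}, where Γ is the complex Gamma function. -/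
open Complex Real Set Filter

noncomputable def Faux (z : ℂ) : ℂ :=
  Complex.Gamma z * Complex.exp (z + (1 / 2 - z) * Complex.log z)

lemma re_aux (z : ℂ) :
    (z + (1 / 2 - z) * Complex.log z).re
      = z.re + ((1 / 2 - z.re) * Real.log (‖z‖) + z.im * Complex.arg z) := by
  have h1 : ((1 : ℂ) / 2 - z).re = 1 / 2 - z.re := by simp
  have h2 : ((1 : ℂ) / 2 - z).im = -z.im := by simp
  rw [Complex.add_re, Complex.mul_re, h1, h2, Complex.log_re, Complex.log_im]
  ring

lemma arg_mul_le (z : ℂ) (hz : 0 ≤ z.re) : z.im * Complex.arg z ≤ π / 2 * |z.im| := by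
  calc z.im * Complex.arg z ≤ |z.im * Complex.arg z| := le_abs_self _
    _ = |z.im| * |Complex.arg z| := abs_mul _ _
    _ ≤ |z.im| * (π / 2) := by
        exact mul_le_mul_of_nonneg_left (Complex.abs_arg_le_pi_div_two_iff.2 hz) (abs_nonneg _)
    _ = π / 2 * |z.im| := mul_comm _ _

lemma arg_mul_ge_core (z : ℂ) (hx : 0 < z.re) (hy : 0 < z.im) :
    π / 2 * z.im - z.re ≤ z.im * Complex.arg z := by
  set θ := Complex.arg z with hθ
  have hθpos : 0 < θ := by
    rcases lt_or_eq_of_le (Complex.arg_nonneg_iff.2 hy.le) with h | h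
    · exact h
    · exfalso
      have := Complex.arg_eq_zero_iff.1 h.symm
      exact hy.ne' this.2
  have hθlt : θ < π / 2 := by
    rcases lt_or_eq_of_le ((abs_le.1 (Complex.abs_arg_le_pi_div_two_iff.2 hx.le)).2) with h | h
    · exact h
    · exfalso
      have := Complex.arg_eq_pi_div_two_iff.1 h
      exact hx.ne' this.1
  -- φ := π/2 - θ satisfies φ ≤ tan φ = x / y
  have htan : Real.tan θ = z.im / z.re := Complex.tan_arg z
  have hφ : π / 2 - θ ≤ Real.tan (π / 2 - θ) :=
    (Real.lt_tan (by linarith) (by linarith)).le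
  have htanφ : Real.tan (π / 2 - θ) = z.re / z.im := by
    rw [Real.tan_pi_div_two_sub, htan, inv_div]
  have h3 : π / 2 - θ ≤ z.re / z.im := hφ.trans htanφ.le
  have := (le_div_iff₀ hy).1 h3
  nlinarith

lemma arg_mul_ge (z : ℂ) (hx : 0 < z.re) :
    π / 2 * |z.im| - z.re ≤ z.im * Complex.arg z := by
  rcases lt_trichotomy z.im 0 with hy | hy | hy
  · have hconj := arg_mul_ge_core (starRingEnd ℂ z) (by simpa using hx) (by simpa using hy)
    have harg : Complex.arg (starRingEnd ℂ z) = -Complex.arg z := by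
      rw [Complex.arg_conj]
      have : Complex.arg z ≠ π := by
        intro h
        exact absurd (Complex.arg_eq_pi_iff.1 h).1 (not_lt.2 hx.le)
      simp [this]
    rw [Complex.conj_re, Complex.conj_im, harg] at hconj
    rw [abs_of_neg hy]
    nlinarith
  · rw [hy]
    simp
    positivity
  · rw [abs_of_pos hy]
    exact arg_mul_ge_core z hx hy
lemma gamma_half_sq {z : ℂ} (hz : z.re = 1 / 2) :
    ‖Complex.Gamma z‖ ^ 2 = π / Real.cosh (π * z.im) := by
  have hconj : 1 - z = starRingEnd ℂ z := by
    apply Complex.ext <;> simp [hz] <;> norm_num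
  have h := Complex.Gamma_mul_Gamma_one_sub z
  rw [hconj, Complex.Gamma_conj, Complex.mul_conj] at h
  have hsin : Complex.sin (π * z) = Real.cosh (π * z.im) := by
    have hzeq : (π : ℂ) * z = π / 2 + (π * z.im) * Complex.I := by
      apply Complex.ext <;> simp [hz] <;> ring
    rw [hzeq, Complex.sin_add, Complex.sin_mul_I, Complex.cos_mul_I]
    push_cast
    rw [Complex.sin_pi_div_two, Complex.cos_pi_div_two]
    ring
  rw [hsin] at h
  have hcoshne : (Real.cosh (π * z.im) : ℂ) ≠ 0 := by
    exact_mod_cast (Real.cosh_pos (x := π * z.im)).ne'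
  have : (Complex.normSq (Complex.Gamma z) : ℂ) = ((π / Real.cosh (π * z.im) : ℝ) : ℂ) := by
    rw [h]
    push_cast
    ring
  have h2 : Complex.normSq (Complex.Gamma z) = π / Real.cosh (π * z.im) := by
    exact_mod_cast this
  rw [← h2, Complex.sq_norm]

lemma norm_Gamma_le {z : ℂ} (h : 0 < z.re) : ‖Complex.Gamma z‖ ≤ Real.Gamma z.re := by
  rw [Complex.Gamma_eq_integral h, Real.Gamma_eq_integral h, Complex.GammaIntegral]
  refine (MeasureTheory.norm_integral_le_integral_norm _).trans ?_
  refine le_of_eq (MeasureTheory.setIntegral_congr_fun measurableSet_Ioi fun t ht => ?_)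
  have ht' : (0 : ℝ) < t := ht
  rw [norm_mul,
    Complex.norm_cpow_eq_rpow_re_of_pos ht', Complex.norm_real, Real.norm_eq_abs, abs_of_pos (Real.exp_pos _),
    Complex.sub_re, Complex.one_re]

lemma norm_Faux (z : ℂ) :
    ‖Faux z‖ = ‖Complex.Gamma z‖ *
      Real.exp (z.re + ((1 / 2 - z.re) * Real.log (‖z‖) + z.im * Complex.arg z)) := by
  rw [Faux, norm_mul, Complex.norm_exp, re_aux]

lemma exp_sq (a : ℝ) : Real.exp a ^ 2 = Real.exp (2 * a) := by
  rw [two_mul, Real.exp_add, sq]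

lemma cosh_lb (x : ℝ) : Real.exp |x| / 2 ≤ Real.cosh x := by
  rw [← Real.cosh_abs, Real.cosh_eq]
  have := Real.exp_pos (-|x|)
  linarith

lemma Faux_line_a {z : ℂ} (hz : z.re = 1 / 2) : ‖Faux z‖ ≤ Real.sqrt (2 * π * Real.exp 3) := by
  set t := |z.im| with ht
  have htn : 0 ≤ t := abs_nonneg _
  have hsq : ‖Faux z‖ ^ 2 ≤ 2 * π * Real.exp 3 := by
    rw [norm_Faux, mul_pow, gamma_half_sq hz, exp_sq]
    have hθ : z.im * Complex.arg z ≤ π / 2 * t := arg_mul_le z (by rw [hz]; norm_num)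
    have hcosh : Real.exp (π * t) / 2 ≤ Real.cosh (π * z.im) := by
      have : |π * z.im| = π * t := by
        rw [abs_mul, abs_of_pos Real.pi_pos, ht]
      have h := cosh_lb (π * z.im)
      rwa [this] at h
    have hcoshpos : 0 < Real.cosh (π * z.im) := Real.cosh_pos _
    rw [div_mul_eq_mul_div, div_le_iff₀ hcoshpos]
    have f1 : Real.exp (2 * (z.re + ((1 / 2 - z.re) * Real.log (‖z‖)
        + z.im * Complex.arg z))) ≤ Real.exp (1 + π * t) := by
      apply Real.exp_le_exp.2
      rw [hz]
      ring_nf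
      nlinarith [hθ]
    have f2 : Real.exp (1 + π * t) = Real.exp 1 * Real.exp (π * t) := Real.exp_add _ _
    have f3 : Real.exp (π * t) ≤ 2 * Real.cosh (π * z.im) := by linarith
    have f4 : Real.exp 1 ≤ Real.exp 3 := Real.exp_le_exp.2 (by norm_num)
    calc π * Real.exp (2 * (z.re + ((1 / 2 - z.re) * Real.log (‖z‖)
          + z.im * Complex.arg z)))
        ≤ π * Real.exp (1 + π * t) := by
          exact mul_le_mul_of_nonneg_left f1 Real.pi_pos.le
      _ = π * Real.exp 1 * Real.exp (π * t) := by rw [f2]; ring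
      _ ≤ π * Real.exp 1 * (2 * Real.cosh (π * z.im)) := by
          exact mul_le_mul_of_nonneg_left f3 (by positivity)
      _ = 2 * π * Real.exp 1 * Real.cosh (π * z.im) := by ring
      _ ≤ 2 * π * Real.exp 3 * Real.cosh (π * z.im) := by
          have h1 := Real.pi_pos
          nlinarith [hcoshpos, f4, mul_pos h1 hcoshpos]
  calc ‖Faux z‖ = Real.sqrt (‖Faux z‖ ^ 2) := (Real.sqrt_sq (norm_nonneg _)).symm
    _ ≤ Real.sqrt (2 * π * Real.exp 3) := Real.sqrt_le_sqrt hsq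

lemma gamma_3half_sq {z : ℂ} (hz : z.re = 3 / 2) :
    ‖Complex.Gamma z‖ ^ 2 = Complex.normSq (z - 1) * (π / Real.cosh (π * z.im)) := by
  have hne : z - 1 ≠ 0 := by
    intro h
    have : (z - 1).re = 0 := by rw [h]; simp
    rw [Complex.sub_re, Complex.one_re, hz] at this
    norm_num at this
  have h := Complex.Gamma_add_one (z - 1) hne
  rw [sub_add_cancel] at h
  have h12 : (z - 1).re = 1 / 2 := by rw [Complex.sub_re, Complex.one_re, hz]; norm_num
  have him : (z - 1).im = z.im := by rw [Complex.sub_im, Complex.one_im, sub_zero]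
  rw [h, norm_mul, mul_pow, gamma_half_sq h12, him, Complex.sq_norm]

lemma Faux_line_b {z : ℂ} (hz : z.re = 3 / 2) : ‖Faux z‖ ≤ Real.sqrt (2 * π * Real.exp 3) := by
  set t := |z.im| with ht
  have htn : 0 ≤ t := abs_nonneg _
  have hrpos : 0 < ‖z‖ := by
    have : z ≠ 0 := by
      intro h; rw [h] at hz; simp at hz; norm_num at hz
    exact norm_pos_iff.mpr this
  have hsq : ‖Faux z‖ ^ 2 ≤ 2 * π * Real.exp 3 := by
    rw [norm_Faux, mul_pow, gamma_3half_sq hz, exp_sq]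
    have hθ : z.im * Complex.arg z ≤ π / 2 * t := arg_mul_le z (by rw [hz]; norm_num)
    have hcosh : Real.exp (π * t) / 2 ≤ Real.cosh (π * z.im) := by
      have habs : |π * z.im| = π * t := by rw [abs_mul, abs_of_pos Real.pi_pos, ht]
      have h := cosh_lb (π * z.im)
      rwa [habs] at h
    have hcoshpos : 0 < Real.cosh (π * z.im) := Real.cosh_pos _
    have hlog : Real.exp (2 * Real.log (‖z‖)) = ‖z‖ ^ 2 := by
      rw [← exp_sq, Real.exp_log hrpos]
    have hsplit : Real.exp (2 * (z.re + ((1 / 2 - z.re) * Real.log (‖z‖)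
        + z.im * Complex.arg z)))
        = Real.exp (3 + 2 * (z.im * Complex.arg z)) / ‖z‖ ^ 2 := by
      rw [eq_div_iff (by positivity), ← hlog, ← Real.exp_add]
      congr 1
      rw [hz]; ring
    rw [hsplit]
    have hA : Complex.normSq (z - 1) ≤ ‖z‖ ^ 2 := by
      rw [Complex.sq_norm]
      simp only [Complex.normSq_apply, Complex.sub_re, Complex.sub_im, Complex.one_re,
        Complex.one_im, hz, sub_zero]
      nlinarith [sq_nonneg z.im]
    have hB : π / Real.cosh (π * z.im) ≤ 2 * π / Real.exp (π * t) := by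
      rw [div_le_div_iff₀ hcoshpos (Real.exp_pos _)]
      nlinarith [Real.pi_pos]
    have hC : Real.exp (3 + 2 * (z.im * Complex.arg z)) ≤ Real.exp 3 * Real.exp (π * t) := by
      rw [← Real.exp_add]
      exact Real.exp_le_exp.2 (by linarith)
    calc Complex.normSq (z - 1) * (π / Real.cosh (π * z.im))
          * (Real.exp (3 + 2 * (z.im * Complex.arg z)) / ‖z‖ ^ 2)
        ≤ ‖z‖ ^ 2 * (2 * π / Real.exp (π * t))
          * (Real.exp 3 * Real.exp (π * t) / ‖z‖ ^ 2) := by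
          gcongr
      _ = 2 * π * Real.exp 3 := by
          field_simp
  calc ‖Faux z‖ = Real.sqrt (‖Faux z‖ ^ 2) := (Real.sqrt_sq (norm_nonneg _)).symm
    _ ≤ Real.sqrt (2 * π * Real.exp 3) := Real.sqrt_le_sqrt hsq

lemma Gamma_re_bd {x : ℝ} (h1 : 1 / 2 ≤ x) (h2 : x ≤ 3 / 2) :
    Real.Gamma x ≤ max (Real.Gamma (1 / 2)) (Real.Gamma (3 / 2)) := by
  refine Real.convexOn_Gamma.le_on_segment (by norm_num) (by norm_num) ?_
  rw [segment_eq_Icc (by norm_num : (1 / 2 : ℝ) ≤ 3 / 2)]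
  exact ⟨h1, h2⟩

lemma Faux_growth {z : ℂ} (h1 : 1 / 2 ≤ z.re) (h2 : z.re ≤ 3 / 2) :
    ‖Faux z‖ ≤ max (Real.Gamma (1 / 2)) (Real.Gamma (3 / 2)) *
      (Real.exp (3 / 2) * (2 * Real.exp (π / 2 * |z.im|))) := by
  have hx : (0 : ℝ) < z.re := by linarith
  have hr : 0 < ‖z‖ := by
    refine lt_of_lt_of_le hx ?_
    exact le_trans (le_abs_self _) (Complex.abs_re_le_norm z)
  rw [norm_Faux]
  have hM : ‖Complex.Gamma z‖ ≤ max (Real.Gamma (1 / 2)) (Real.Gamma (3 / 2)) :=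
    (norm_Gamma_le hx).trans (Gamma_re_bd h1 h2)
  have hlogbd : (1 / 2 - z.re) * Real.log (‖z‖) ≤ Real.log 2 := by
    rcases le_or_gt 1 (‖z‖) with hr1 | hr1
    · have hl : 0 ≤ Real.log (‖z‖) := Real.log_nonneg hr1
      have hl2 : (0:ℝ) ≤ Real.log 2 := Real.log_nonneg one_le_two
      nlinarith
    · have hl : Real.log (‖z‖) ≤ 0 := Real.log_nonpos hr.le hr1.le
      have hinv : Real.log (‖z‖)⁻¹ ≤ Real.log 2 := by
        apply Real.log_le_log (by positivity)
        have habs : (1 / 2 : ℝ) ≤ ‖z‖ :=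
          h1.trans (le_trans (le_abs_self _) (Complex.abs_re_le_norm z))
        rw [inv_le_comm₀ hr (by norm_num)]
        linarith
      rw [Real.log_inv] at hinv
      nlinarith
  have hE : Real.exp (z.re + ((1 / 2 - z.re) * Real.log (‖z‖)
      + z.im * Complex.arg z)) ≤ Real.exp (3 / 2) * (2 * Real.exp (π / 2 * |z.im|)) := by
    rw [Real.exp_add, Real.exp_add]
    have e1 : Real.exp z.re ≤ Real.exp (3 / 2) := Real.exp_le_exp.2 h2
    have e2 : Real.exp ((1 / 2 - z.re) * Real.log (‖z‖)) ≤ 2 := by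
      calc Real.exp ((1 / 2 - z.re) * Real.log (‖z‖))
          ≤ Real.exp (Real.log 2) := Real.exp_le_exp.2 hlogbd
        _ = 2 := Real.exp_log (by norm_num)
    have e3 : Real.exp (z.im * Complex.arg z) ≤ Real.exp (π / 2 * |z.im|) :=
      Real.exp_le_exp.2 (arg_mul_le z hx.le)
    have := mul_le_mul e2 e3 (Real.exp_pos _).le (by norm_num)
    exact mul_le_mul e1 this (by positivity) (Real.exp_pos _).le
  exact mul_le_mul hM hE (Real.exp_pos _).le
    (le_trans (Real.Gamma_pos_of_pos (by norm_num)).le (le_max_left _ _))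

lemma Faux_strip_bound {z : ℂ} (h1 : 1 / 2 ≤ z.re) (h2 : z.re ≤ 3 / 2) :
    ‖Faux z‖ ≤ Real.sqrt (2 * π * Real.exp 3) := by
  have hdiff : ∀ w : ℂ, 0 < w.re → DifferentiableAt ℂ Faux w := by
    intro w hw
    apply DifferentiableAt.mul
    · apply Complex.differentiableAt_Gamma
      intro m h
      rw [h] at hw
      simp only [Complex.neg_re, Complex.natCast_re] at hw
      have : (0 : ℝ) ≤ m := Nat.cast_nonneg m
      linarith
    · apply DifferentiableAt.cexp
      apply DifferentiableAt.add differentiableAt_id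
      exact DifferentiableAt.mul ((differentiableAt_const _).sub differentiableAt_id)
        (Complex.differentiableAt_log (Complex.mem_slitPlane_iff.2 (Or.inl hw)))
  have hsub : closure (Complex.re ⁻¹' Ioo (1 / 2 : ℝ) (3 / 2)) ⊆
      Complex.re ⁻¹' Icc (1 / 2 : ℝ) (3 / 2) :=
    closure_minimal (preimage_mono Ioo_subset_Icc_self)
      (IsClosed.preimage Complex.continuous_re isClosed_Icc)
  apply PhragmenLindelof.vertical_strip (a := 1 / 2) (b := 3 / 2)
    ?_ ?_ (fun w hw => Faux_line_a hw) (fun w hw => Faux_line_b hw) h1 h2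
  · constructor
    · intro w hw
      simp only [mem_preimage, mem_Ioo] at hw
      exact (hdiff w (by linarith [hw.1])).differentiableWithinAt
    · intro w hw
      have hw' := hsub hw
      simp only [mem_preimage, mem_Icc] at hw'
      exact (hdiff w (by linarith [hw'.1])).continuousAt.continuousWithinAt
  · refine ⟨1, ?_, π / 2, ?_⟩
    · rw [show (3 / 2 : ℝ) - 1 / 2 = 1 by norm_num, div_one]
      exact lt_trans (by norm_num) Real.pi_gt_three
    rw [Asymptotics.isBigO_iff]
    refine ⟨max (Real.Gamma (1 / 2)) (Real.Gamma (3 / 2)) * (Real.exp (3 / 2) * 2), ?_⟩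
    rw [Filter.eventually_inf_principal]
    refine Filter.Eventually.of_forall fun w hw => ?_
    simp only [mem_preimage, mem_Ioo] at hw
    have hw1 : (1 / 2 : ℝ) ≤ w.re := hw.1.le
    have hw2 : w.re ≤ 3 / 2 := hw.2.le
    have hgr := Faux_growth hw1 hw2
    have hexp : Real.exp (π / 2 * |w.im|) ≤ Real.exp (π / 2 * Real.exp (1 * |w.im|)) := by
      apply Real.exp_le_exp.2
      have h1 : |w.im| ≤ Real.exp |w.im| := by
        have := Real.add_one_le_exp |w.im|
        linarith
      rw [one_mul]
      nlinarith [Real.pi_pos]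
    rw [Real.norm_eq_abs, abs_of_pos (Real.exp_pos _)]
    calc ‖Faux w‖ ≤ max (Real.Gamma (1 / 2)) (Real.Gamma (3 / 2)) *
          (Real.exp (3 / 2) * (2 * Real.exp (π / 2 * |w.im|))) := hgr
      _ ≤ max (Real.Gamma (1 / 2)) (Real.Gamma (3 / 2)) *
          (Real.exp (3 / 2) * (2 * Real.exp (π / 2 * Real.exp (1 * |w.im|)))) := by
          gcongr
      _ = max (Real.Gamma (1 / 2)) (Real.Gamma (3 / 2)) * (Real.exp (3 / 2) * 2) *
          Real.exp (π / 2 * Real.exp (1 * |w.im|)) := by ring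

lemma gamma_strip {z : ℂ} (h1 : 1 / 2 ≤ z.re) (h2 : z.re ≤ 3 / 2) :
    ‖Complex.Gamma z‖ ≤ Real.sqrt (2 * π * Real.exp 3) *
      (‖z‖ ^ (z.re - 1 / 2) * Real.exp (-(π * |z.im|) / 2)) := by
  have hb := Faux_strip_bound h1 h2
  rw [norm_Faux] at hb
  have hx : (0 : ℝ) < z.re := by linarith
  have hr : 0 < ‖z‖ :=
    lt_of_lt_of_le hx (le_trans (le_abs_self _) (Complex.abs_re_le_norm z))
  set R := z.re + ((1 / 2 - z.re) * Real.log (‖z‖) + z.im * Complex.arg z) with hR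
  have hΓ : ‖Complex.Gamma z‖ ≤ Real.sqrt (2 * π * Real.exp 3) * Real.exp (-R) := by
    have h' := (le_div_iff₀ (Real.exp_pos R)).2 hb
    rwa [div_eq_mul_inv, ← Real.exp_neg] at h'
  refine hΓ.trans (mul_le_mul_of_nonneg_left ?_ (Real.sqrt_nonneg _))
  have key : Real.exp (-R) = Real.exp (Real.log (‖z‖) * (z.re - 1 / 2)) *
      Real.exp (-z.re - z.im * Complex.arg z) := by
    rw [← Real.exp_add]
    congr 1
    rw [hR]; ring
  rw [key, ← Real.rpow_def_of_pos hr]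
  apply mul_le_mul_of_nonneg_left _ (Real.rpow_nonneg hr.le _)
  apply Real.exp_le_exp.2
  have := arg_mul_ge z hx
  linarith



/-- For `0 < ε < 1/2` there is `C = C(ε)` such that for all complex `w` with
`ε ≤ Re w ≤ 1 − ε` and each sign `s = ±1`,
`|Γ(1−w)(cos(π(1−w)/2) + i·s·sin(π(1−w)/2))| ≤ C |w|^{1/2 − Re w}`. -/
theorem gamma_trig_bound (ε : ℝ) (hε : 0 < ε) (hε' : ε < 1 / 2) :
    ∃ C : ℝ, 0 < C ∧ ∀ w : ℂ, ε ≤ w.re → w.re ≤ 1 - ε → ∀ s : ℝ, s = 1 ∨ s = -1 →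
      ‖Complex.Gamma (1 - w) *
          (Complex.cos ((Real.pi : ℂ) * (1 - w) / 2) +
            Complex.I * (s : ℂ) * Complex.sin ((Real.pi : ℂ) * (1 - w) / 2))‖
        ≤ C * ‖w‖ ^ (1 / 2 - w.re) := by
  set C₀ := Real.sqrt (2 * π * Real.exp 3) with hC₀
  have hC₀pos : 0 < C₀ := Real.sqrt_pos.2 (by positivity)
  refine ⟨C₀ * ((1 + 2 / ε) * (1 + 1 / ε)), by positivity, ?_⟩
  intro w hw1 hw2 s hs
  set t := |w.im| with ht
  have hwpos : 0 < ‖w‖ := by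
    refine lt_of_lt_of_le (lt_of_lt_of_le hε hw1) ?_
    exact le_trans (le_abs_self _) (Complex.abs_re_le_norm w)
  have hεw : ε ≤ ‖w‖ :=
    hw1.trans (le_trans (le_abs_self _) (Complex.abs_re_le_norm w))
  -- trig factor
  have htrig : ‖Complex.cos ((Real.pi : ℂ) * (1 - w) / 2) +
      Complex.I * (s : ℂ) * Complex.sin ((Real.pi : ℂ) * (1 - w) / 2)‖
      ≤ Real.exp (π * t / 2) := by
    set A := (Real.pi : ℂ) * (1 - w) / 2 with hA
    have hAim : A.im = -(π * w.im) / 2 := by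
      rw [hA]
      simp [Complex.div_im, Complex.mul_im, Complex.mul_re, Complex.sub_im, Complex.sub_re]
    rcases hs with h | h
    · have : Complex.cos A + Complex.I * (s : ℂ) * Complex.sin A = Complex.exp (A * Complex.I) := by
        rw [Complex.exp_mul_I, h]
        push_cast
        ring
      rw [this, Complex.norm_exp]
      have : (A * Complex.I).re = -A.im := by simp
      rw [this, hAim]
      apply Real.exp_le_exp.2
      have : π * w.im / 2 ≤ π * t / 2 := by
        have : w.im ≤ t := le_abs_self _
        nlinarith [Real.pi_pos]
      linarith
    · have : Complex.cos A + Complex.I * (s : ℂ) * Complex.sin A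
          = Complex.exp (-A * Complex.I) := by
        rw [show -A * Complex.I = -A * Complex.I by rfl, Complex.exp_mul_I, h,
          Complex.cos_neg, Complex.sin_neg]
        push_cast
        ring
      rw [this, Complex.norm_exp]
      have hre : (-A * Complex.I).re = A.im := by simp
      rw [hre, hAim]
      apply Real.exp_le_exp.2
      have : -(π * w.im) ≤ π * t := by
        have h1 : -w.im ≤ t := neg_le_abs _
        nlinarith [Real.pi_pos]
      linarith
  rw [norm_mul]
  have himeq : |(1 - w).im| = t := by
    rw [Complex.sub_im, Complex.one_im, zero_sub, abs_neg]
  rcases le_or_gt w.re (1 / 2) with hcase | hcase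
  · -- 1/2 ≤ re (1-w) ≤ 1
    have hz1 : (1 / 2 : ℝ) ≤ (1 - w).re := by
      rw [Complex.sub_re, Complex.one_re]; linarith
    have hz2 : (1 - w).re ≤ 3 / 2 := by
      rw [Complex.sub_re, Complex.one_re]; linarith
    have hg := gamma_strip hz1 hz2
    rw [himeq] at hg
    have hstep : ‖Complex.Gamma (1 - w)‖ * ‖Complex.cos ((Real.pi : ℂ) * (1 - w) / 2) +
        Complex.I * (s : ℂ) * Complex.sin ((Real.pi : ℂ) * (1 - w) / 2)‖
        ≤ C₀ * ‖1 - w‖ ^ ((1 - w).re - 1 / 2) := by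
      calc ‖Complex.Gamma (1 - w)‖ * ‖_ + _‖
          ≤ (C₀ * (‖1 - w‖ ^ ((1 - w).re - 1 / 2) * Real.exp (-(π * t) / 2))) *
            Real.exp (π * t / 2) := by
            exact mul_le_mul hg htrig (norm_nonneg _) (by positivity)
        _ = C₀ * ‖1 - w‖ ^ ((1 - w).re - 1 / 2) *
            (Real.exp (-(π * t) / 2) * Real.exp (π * t / 2)) := by ring
        _ = C₀ * ‖1 - w‖ ^ ((1 - w).re - 1 / 2) := by
            rw [← Real.exp_add, neg_div, neg_add_cancel, Real.exp_zero, mul_one]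
            
    refine hstep.trans ?_
    have hrexp : (1 - w).re - 1 / 2 = 1 / 2 - w.re := by
      rw [Complex.sub_re, Complex.one_re]; ring
    rw [hrexp]
    have habs : ‖1 - w‖ ≤ (1 + 1 / ε) * ‖w‖ := by
      calc ‖1 - w‖ ≤ ‖(1 : ℂ)‖ + ‖w‖ := by
            simpa [sub_eq_add_neg] using norm_add_le 1 (-w)
        _ = 1 + ‖w‖ := by simp
        _ ≤ (1 / ε) * ‖w‖ + ‖w‖ := by
            have h2 : (1:ℝ) ≤ 1 / ε * ‖w‖ := by
              rw [one_div, ← div_eq_inv_mul]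
              exact (one_le_div hε).2 hεw
            linarith
        _ = (1 + 1 / ε) * ‖w‖ := by ring
    have hexpnn : (0 : ℝ) ≤ 1 / 2 - w.re := by linarith
    calc C₀ * ‖1 - w‖ ^ (1 / 2 - w.re)
        ≤ C₀ * ((1 + 1 / ε) * ‖w‖) ^ (1 / 2 - w.re) := by
          apply mul_le_mul_of_nonneg_left _ hC₀pos.le
          exact Real.rpow_le_rpow (norm_nonneg _) habs hexpnn
      _ = C₀ * ((1 + 1 / ε) ^ (1 / 2 - w.re) * ‖w‖ ^ (1 / 2 - w.re)) := by
          rw [Real.mul_rpow (by positivity) (norm_nonneg _)]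
      _ ≤ C₀ * (((1 + 2 / ε) * (1 + 1 / ε)) * ‖w‖ ^ (1 / 2 - w.re)) := by
          have hb1 : (1 + 1 / ε : ℝ) ^ (1 / 2 - w.re) ≤ (1 + 1 / ε) := by
            calc (1 + 1 / ε : ℝ) ^ (1 / 2 - w.re) ≤ (1 + 1 / ε : ℝ) ^ (1 : ℝ) := by
                  apply Real.rpow_le_rpow_of_exponent_le ?_ (by linarith)
                  have := one_div_pos.2 hε
                  linarith
              _ = 1 + 1 / ε := Real.rpow_one _
          have h2ε : (1 : ℝ) ≤ 1 + 2 / ε := by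
            have := div_pos (by norm_num : (0:ℝ) < 2) hε
            linarith
          have hwnn : (0:ℝ) ≤ ‖w‖ ^ (1 / 2 - w.re) :=
            Real.rpow_nonneg (norm_nonneg _) _
          have hb2 : (1 + 1 / ε : ℝ) ^ (1 / 2 - w.re) ≤ (1 + 2 / ε) * (1 + 1 / ε) := by
            refine hb1.trans ?_
            have := one_div_pos.2 hε
            nlinarith
          exact mul_le_mul_of_nonneg_left (mul_le_mul_of_nonneg_right hb2 hwnn) hC₀pos.le
      _ = C₀ * ((1 + 2 / ε) * (1 + 1 / ε)) * ‖w‖ ^ (1 / 2 - w.re) := by ring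
  · -- case 1/2 < w.re : use Γ(1-w) = Γ(2-w)/(1-w)
    have hne : (1 : ℂ) - w ≠ 0 := by
      intro h
      have h0 : ((1 : ℂ) - w).re = 0 := by rw [h]; simp
      rw [Complex.sub_re, Complex.one_re] at h0
      linarith
    have h1wpos : 0 < ‖1 - w‖ := norm_pos_iff.mpr hne
    have h1wε : ε ≤ ‖1 - w‖ := by
      have hre : ε ≤ ((1 : ℂ) - w).re := by rw [Complex.sub_re, Complex.one_re]; linarith
      exact hre.trans (le_trans (le_abs_self _) (Complex.abs_re_le_norm _))
    have h2re : ((2 : ℂ) - w).re = 2 - w.re := by simp [Complex.sub_re]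
    have hz1 : (1 / 2 : ℝ) ≤ ((2 : ℂ) - w).re := by rw [h2re]; linarith
    have hz2 : ((2 : ℂ) - w).re ≤ 3 / 2 := by rw [h2re]; linarith
    have hg := gamma_strip hz1 hz2
    have him2 : |((2 : ℂ) - w).im| = t := by
      rw [Complex.sub_im, ht]
      simp
    rw [him2, h2re] at hg
    have hgam : Complex.Gamma (2 - w) = (1 - w) * Complex.Gamma (1 - w) := by
      have h := Complex.Gamma_add_one (1 - w) hne
      rw [show (1 : ℂ) - w + 1 = 2 - w by ring] at h
      exact h
    have hγeq : ‖Complex.Gamma (1 - w)‖ = ‖Complex.Gamma (2 - w)‖ / ‖1 - w‖ := by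
      rw [hgam, norm_mul]
      field_simp
    set a := 2 - w.re - 1 / 2 with ha
    have ha0 : (0 : ℝ) ≤ a := by rw [ha]; linarith
    have ha1 : a ≤ 1 := by rw [ha]; linarith
    have h2w : ‖2 - w‖ ≤ (1 + 2 / ε) * ‖w‖ := by
      calc ‖2 - w‖ ≤ ‖(2 : ℂ)‖ + ‖w‖ := by
            simpa [sub_eq_add_neg] using norm_add_le 2 (-w)
        _ = 2 + ‖w‖ := by norm_num
        _ ≤ (2 / ε) * ‖w‖ + ‖w‖ := by
            have h2 : (1 : ℝ) ≤ 1 / ε * ‖w‖ := by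
              rw [one_div, ← div_eq_inv_mul]
              exact (one_le_div hε).2 hεw
            have : (2 : ℝ) ≤ 2 / ε * ‖w‖ := by
              have : (2 : ℝ) / ε * ‖w‖ = 2 * (1 / ε * ‖w‖) := by ring
              rw [this]; linarith
            linarith
        _ = (1 + 2 / ε) * ‖w‖ := by ring
    have hwle : ‖w‖ ≤ (1 + 1 / ε) * ‖1 - w‖ := by
      calc ‖w‖ = ‖1 - (1 - w)‖ := by norm_num
        _ ≤ ‖1‖ + ‖1 - w‖ := norm_sub_le 1 (1 - w)
        _ = 1 + ‖1 - w‖ := by norm_num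
        _ ≤ (1 / ε) * ‖1 - w‖ + ‖1 - w‖ := by
            have h2 : (1 : ℝ) ≤ 1 / ε * ‖1 - w‖ := by
              rw [one_div, ← div_eq_inv_mul]
              exact (one_le_div hε).2 h1wε
            linarith
        _ = (1 + 1 / ε) * ‖1 - w‖ := by ring
    have h2εpos : (0 : ℝ) < 1 + 2 / ε := by positivity
    have h1εpos : (0 : ℝ) < 1 + 1 / ε := by positivity
    calc ‖Complex.Gamma (1 - w)‖ * ‖Complex.cos ((Real.pi : ℂ) * (1 - w) / 2) +
          Complex.I * (s : ℂ) * Complex.sin ((Real.pi : ℂ) * (1 - w) / 2)‖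
        ≤ (C₀ * (‖2 - w‖ ^ a * Real.exp (-(π * t) / 2)) / ‖1 - w‖) *
            Real.exp (π * t / 2) := by
          apply mul_le_mul _ htrig (norm_nonneg _) (by positivity)
          rw [hγeq]
          gcongr
      _ = C₀ * ‖2 - w‖ ^ a / ‖1 - w‖ := by
          rw [mul_comm (C₀ * (‖2 - w‖ ^ a * Real.exp (-(π * t) / 2)) /
            ‖1 - w‖) (Real.exp (π * t / 2))]
          rw [mul_div_assoc']
          congr 1
          rw [show Real.exp (π * t / 2) * (C₀ * (‖2 - w‖ ^ a *
            Real.exp (-(π * t) / 2))) = C₀ * ‖2 - w‖ ^ a *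
            (Real.exp (π * t / 2) * Real.exp (-(π * t) / 2)) by ring,
            ← Real.exp_add, show π * t / 2 + -(π * t) / 2 = 0 by ring, Real.exp_zero, mul_one]
      _ ≤ C₀ * ((1 + 2 / ε) * (‖w‖ ^ a)) / ‖1 - w‖ := by
          gcongr
          calc ‖2 - w‖ ^ a ≤ ((1 + 2 / ε) * ‖w‖) ^ a :=
                Real.rpow_le_rpow (norm_nonneg _) h2w ha0
            _ = (1 + 2 / ε) ^ a * ‖w‖ ^ a :=
                Real.mul_rpow h2εpos.le (norm_nonneg _)
            _ ≤ (1 + 2 / ε) * ‖w‖ ^ a := by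
                have : (1 + 2 / ε : ℝ) ^ a ≤ (1 + 2 / ε) := by
                  calc (1 + 2 / ε : ℝ) ^ a ≤ (1 + 2 / ε : ℝ) ^ (1 : ℝ) := by
                        apply Real.rpow_le_rpow_of_exponent_le ?_ ha1
                        have := div_pos (by norm_num : (0:ℝ) < 2) hε
                        linarith
                    _ = 1 + 2 / ε := Real.rpow_one _
                exact mul_le_mul_of_nonneg_right this (Real.rpow_nonneg (norm_nonneg _) _)
      _ = C₀ * (1 + 2 / ε) * (‖w‖ ^ (1 / 2 - w.re)) *
            (‖w‖ / ‖1 - w‖) := by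
          have hsplit : ‖w‖ ^ a = ‖w‖ ^ (1 / 2 - w.re) * ‖w‖ := by
            rw [ha, show (2 : ℝ) - w.re - 1 / 2 = (1 / 2 - w.re) + 1 by ring,
              Real.rpow_add hwpos, Real.rpow_one]
          rw [hsplit]
          field_simp
      _ ≤ C₀ * (1 + 2 / ε) * (‖w‖ ^ (1 / 2 - w.re)) * (1 + 1 / ε) := by
          gcongr
          rw [div_le_iff₀ h1wpos]
          linarith [hwle]
      _ = C₀ * ((1 + 2 / ε) * (1 + 1 / ε)) * ‖w‖ ^ (1 / 2 - w.re) := by ring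
end

section
/- Let f : ℝ⁴ → ℂ be a Schwartz function and for a sign ε ∈ {+1,−1} define Σ^ε(f, z₁, z₂) = ∫₀^∞ ∫₀^∞ f(0,0,t,εu) t^{z₁−1} u^{z₂−1} dt du. Then: (i) the double integral converges absolutely whenever Re(z₁) > 0 and Re(z₂) > 0, and Σ^ε(f, z₁, z₂) is holomorphic in each variable there; (ii) for all σ₁, σ₂ > 0 and all A₁, A₂ > 0 there is a constant C such that for all real t₁, t₂: |Σ^ε(f, σ₁ + it₁, σ₂ + it₂)| ≤ C · (1 + |t₁|)^{−A₁} · (1 + |t₂|)^{−A₂}; (iii) for every real t > 0, writing f^t(x) = f(t·x), one has Σ^ε(f^t, z₁, z₂) = t^{−z₁−z₂} · Σ^ε(f, z₁, z₂). -/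
open MeasureTheory Set Complex Filter

/-- `Σ^ε(f, z₁, z₂) = ∫₀^∞ ∫₀^∞ f(0,0,t,εu) t^{z₁−1} u^{z₂−1} dt du`. -/
noncomputable def Sigma2 (f : (Fin 4 → ℝ) → ℂ) (e : ℝ) (z₁ z₂ : ℂ) : ℂ :=
  ∫ p in Set.Ioi (0 : ℝ) ×ˢ Set.Ioi (0 : ℝ),
    f ![0, 0, p.1, e * p.2] * (p.1 : ℂ) ^ (z₁ - 1) * (p.2 : ℂ) ^ (z₂ - 1)

namespace Sigma2Aux

lemma abs_le_norm_vec2 (e t u : ℝ) : |t| ≤ ‖(![0,0,t,e*u] : Fin 4 → ℝ)‖ := by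
  simpa using norm_le_pi_norm (![0,0,t,e*u] : Fin 4 → ℝ) 2

lemma abs_le_norm_vec3 {e : ℝ} (he : |e| = 1) (t u : ℝ) :
    |u| ≤ ‖(![0,0,t,e*u] : Fin 4 → ℝ)‖ := by
  have := norm_le_pi_norm (![0,0,t,e*u] : Fin 4 → ℝ) 3
  simp only [Matrix.cons_val_three, Matrix.tail_cons, Matrix.head_cons, Real.norm_eq_abs,
    abs_mul, he, one_mul] at this
  exact this

/-- Schwartz decay in the slice variables. -/
lemma decay {e : ℝ} (he : |e| = 1) (f : SchwartzMap (Fin 4 → ℝ) ℂ) (k : ℕ) :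
    ∃ C : ℝ, 0 ≤ C ∧ ∀ t u : ℝ,
      ‖f ![0,0,t,e*u]‖ ≤ C * ((1+|t|)^k)⁻¹ * ((1+|u|)^k)⁻¹ := by
  set C : ℝ := 2 ^ (2*k) * ((Finset.Iic (2*k, 0)).sup fun m => SchwartzMap.seminorm ℝ m.1 m.2) f
    with hC
  have hC0 : 0 ≤ C := by positivity
  refine ⟨C, hC0, fun t u => ?_⟩
  set x : Fin 4 → ℝ := ![0,0,t,e*u] with hx
  have h1 : (1 + ‖x‖) ^ (2*k) * ‖f x‖ ≤ C := by
    have := SchwartzMap.one_add_le_sup_seminorm_apply (𝕜 := ℝ) (m := (2*k, 0))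
      le_rfl le_rfl f x
    simpa [norm_iteratedFDeriv_zero] using this
  have ht : (0:ℝ) < 1 + |t| := by positivity
  have hu : (0:ℝ) < 1 + |u| := by positivity
  have h2 : (1+|t|)^k * (1+|u|)^k ≤ (1 + ‖x‖) ^ (2*k) := by
    rw [two_mul, pow_add]
    gcongr
    · linarith [abs_le_norm_vec2 e t u]
    · linarith [abs_le_norm_vec3 he t u]
  rw [mul_assoc, ← mul_inv, ← div_eq_mul_inv, le_div_iff₀ (by positivity)]
  calc ‖f x‖ * ((1+|t|)^k * (1+|u|)^k) ≤ ‖f x‖ * (1 + ‖x‖) ^ (2*k) := by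
        gcongr
    _ = (1 + ‖x‖) ^ (2*k) * ‖f x‖ := mul_comm _ _
    _ ≤ C := h1


lemma KcontOn (k : ℕ) (σ : ℝ) :
    ContinuousOn (fun x : ℝ => ((1+|x|)^k)⁻¹ * x ^ (σ-1)) (Ioi 0) := by
  apply ContinuousOn.mul
  · apply Continuous.continuousOn
    exact (((continuous_const.add _root_.continuous_abs).pow k).inv₀
      (fun x => (pow_pos (by positivity : (0:ℝ) < 1 + |x|) k).ne'))
  · intro x hx
    exact (Real.continuousAt_rpow_const x _ (Or.inl (ne_of_gt hx))).continuousWithinAt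

lemma Kmeas (k : ℕ) (σ : ℝ) {S : Set ℝ} (hS : MeasurableSet S) (hS' : S ⊆ Ioi 0) :
    AEStronglyMeasurable (fun x : ℝ => ((1+|x|)^k)⁻¹ * x ^ (σ-1)) (volume.restrict S) :=
  ((KcontOn k σ).mono hS').aestronglyMeasurable hS

/-- The weight kernel is integrable on `(0,∞)`. -/
lemma Kint {σ : ℝ} (hσ : 0 < σ) {k : ℕ} (hk : σ < k) :
    IntegrableOn (fun x : ℝ => ((1+|x|)^k)⁻¹ * x ^ (σ-1)) (Ioi 0) := by
  have h01 : IntegrableOn (fun x : ℝ => ((1+|x|)^k)⁻¹ * x ^ (σ-1)) (Ioc 0 1) := by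
    have hbig : IntegrableOn (fun x : ℝ => x ^ (σ-1)) (Ioc (0:ℝ) 1) := by
      have := intervalIntegral.intervalIntegrable_rpow' (a := 0) (b := 1) (r := σ-1)
        (by linarith)
      rwa [intervalIntegrable_iff_integrableOn_Ioc_of_le (by norm_num)] at this
    refine hbig.mono' (Kmeas k σ measurableSet_Ioc Ioc_subset_Ioi_self) ?_
    filter_upwards [ae_restrict_mem measurableSet_Ioc] with x hx
    have hx0 : 0 < x := hx.1
    have h1 : (0:ℝ) < (1+|x|)^k := by positivity
    rw [Real.norm_eq_abs, abs_mul, _root_.abs_of_nonneg (by positivity),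
      _root_.abs_of_nonneg (Real.rpow_nonneg hx0.le _)]
    nth_rewrite 2 [← one_mul (x ^ (σ-1))]
    gcongr
    rw [inv_le_one_iff₀]
    right
    exact one_le_pow₀ (by simp [abs_nonneg])
  have h1i : IntegrableOn (fun x : ℝ => ((1+|x|)^k)⁻¹ * x ^ (σ-1)) (Ioi 1) := by
    have hbig : IntegrableOn (fun x : ℝ => x ^ (σ-1-k)) (Ioi (1:ℝ)) :=
      integrableOn_Ioi_rpow_of_lt (by push_cast; linarith) one_pos
    refine hbig.mono' (Kmeas k σ measurableSet_Ioi (Ioi_subset_Ioi zero_le_one)) ?_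
    filter_upwards [ae_restrict_mem measurableSet_Ioi] with x hx
    have hx1 : (1:ℝ) < x := hx
    have hx0 : (0:ℝ) < x := by linarith
    rw [Real.norm_eq_abs, abs_mul, _root_.abs_of_nonneg (by positivity),
      _root_.abs_of_nonneg (Real.rpow_nonneg hx0.le _)]
    have hxk : x ^ (k:ℝ) ≤ (1+|x|)^k := by
      rw [← Real.rpow_natCast (1+|x|) k]
      exact Real.rpow_le_rpow hx0.le
        (by rw [_root_.abs_of_nonneg hx0.le]; linarith) (Nat.cast_nonneg k)
    calc ((1+|x|)^k)⁻¹ * x ^ (σ-1) ≤ (x ^ (k:ℝ))⁻¹ * x ^ (σ-1) := by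
          gcongr
      _ = x ^ (σ-1-k) := by
          rw [← Real.rpow_neg hx0.le, ← Real.rpow_add hx0]; ring_nf
  have : Ioi (0:ℝ) = Ioc 0 1 ∪ Ioi 1 := (Ioc_union_Ioi_eq_Ioi (by norm_num)).symm
  rw [this]
  exact h01.union h1i


lemma cpow_contOn (z : ℂ) : ContinuousOn (fun x : ℝ => (x:ℂ) ^ z) (Ioi 0) :=
  fun x hx => (Complex.continuousAt_ofReal_cpow_const x z (Or.inr (ne_of_gt hx))).continuousWithinAt

lemma norm_ofReal_cpow {x : ℝ} (hx : 0 < x) (z : ℂ) : ‖(x:ℂ) ^ z‖ = x ^ z.re := by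
  rw [Complex.norm_cpow_eq_rpow_re_of_pos hx]

/-- 1-D integrability of `h x * x^(z-1)` for decaying `h`. -/
lemma int1d {h : ℝ → ℂ} (hc : Continuous h) {C : ℝ} {k : ℕ}
    (hb : ∀ x, ‖h x‖ ≤ C * ((1+|x|)^k)⁻¹) {z : ℂ} (hz : 0 < z.re) (hk : z.re < k) :
    IntegrableOn (fun x => h x * (x:ℂ)^(z-1)) (Ioi 0) := by
  refine ((Kint hz hk).const_mul C).mono' ?_ ?_
  · exact (hc.aestronglyMeasurable.restrict).mul
      ((cpow_contOn (z-1)).aestronglyMeasurable measurableSet_Ioi)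
  · filter_upwards [ae_restrict_mem measurableSet_Ioi] with x hx
    have hx0 : (0:ℝ) < x := hx
    have hcp : ‖(x:ℂ)^(z-1)‖ = x ^ (z.re-1) := by
      rw [norm_ofReal_cpow hx0]; simp [Complex.sub_re]
    rw [norm_mul, hcp]
    calc ‖h x‖ * x ^ (z.re-1) ≤ (C * ((1+|x|)^k)⁻¹) * x ^ (z.re-1) :=
          mul_le_mul_of_nonneg_right (hb x) (Real.rpow_nonneg hx0.le _)
      _ = C * (((1+|x|)^k)⁻¹ * x ^ (z.re-1)) := by ring

lemma contVec (e : ℝ) : Continuous (fun p : ℝ × ℝ => (![0,0,p.1,e*p.2] : Fin 4 → ℝ)) := by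
  apply continuous_pi; intro i; fin_cases i <;> simp <;> fun_prop

lemma contVec1 (e u : ℝ) : Continuous (fun t : ℝ => (![0,0,t,e*u] : Fin 4 → ℝ)) := by
  apply continuous_pi; intro i; fin_cases i <;> simp <;> fun_prop

lemma aesm2 (f : SchwartzMap (Fin 4 → ℝ) ℂ) (e : ℝ) (z₁ z₂ : ℂ) :
    AEStronglyMeasurable
      (fun p : ℝ × ℝ => f ![0,0,p.1,e*p.2] * (p.1:ℂ)^(z₁-1) * (p.2:ℂ)^(z₂-1))
      (volume.restrict (Ioi (0:ℝ) ×ˢ Ioi (0:ℝ))) := by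
  apply ContinuousOn.aestronglyMeasurable _ (measurableSet_Ioi.prod measurableSet_Ioi)
  apply ContinuousOn.mul
  apply ContinuousOn.mul
  · exact (f.continuous.comp (contVec e)).continuousOn
  · exact (cpow_contOn (z₁-1)).comp continuous_fst.continuousOn (fun p hp => hp.1)
  · exact (cpow_contOn (z₂-1)).comp continuous_snd.continuousOn (fun p hp => hp.2)

/-- Part (i): absolute convergence of the double integral. -/
lemma key_int (f : SchwartzMap (Fin 4 → ℝ) ℂ) {e : ℝ} (he : |e| = 1) {z₁ z₂ : ℂ}
    (h₁ : 0 < z₁.re) (h₂ : 0 < z₂.re) :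
    IntegrableOn
      (fun p : ℝ × ℝ => f ![0,0,p.1,e*p.2] * (p.1:ℂ)^(z₁-1) * (p.2:ℂ)^(z₂-1))
      (Ioi (0:ℝ) ×ˢ Ioi (0:ℝ)) := by
  set k : ℕ := ⌊max z₁.re z₂.re⌋₊ + 1 with hkdef
  have hmax : max z₁.re z₂.re < k := by
    rw [hkdef]; push_cast; exact Nat.lt_floor_add_one _
  have hk₁ : z₁.re < k := lt_of_le_of_lt (le_max_left _ _) hmax
  have hk₂ : z₂.re < k := lt_of_le_of_lt (le_max_right _ _) hmax
  obtain ⟨C, hC0, hC⟩ := decay he f k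
  have hmaj : IntegrableOn
      (fun p : ℝ × ℝ => (C * (((1+|p.1|)^k)⁻¹ * p.1 ^ (z₁.re-1))) *
        (((1+|p.2|)^k)⁻¹ * p.2 ^ (z₂.re-1))) (Ioi (0:ℝ) ×ˢ Ioi (0:ℝ)) := by
    rw [IntegrableOn, Measure.volume_eq_prod, ← Measure.prod_restrict]
    exact ((Kint h₁ hk₁).const_mul C).mul_prod (Kint h₂ hk₂)
  refine hmaj.mono' (aesm2 f e z₁ z₂) ?_
  filter_upwards [ae_restrict_mem (measurableSet_Ioi.prod measurableSet_Ioi)] with p hp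
  have hp1 : (0:ℝ) < p.1 := hp.1
  have hp2 : (0:ℝ) < p.2 := hp.2
  rw [norm_mul, norm_mul, norm_ofReal_cpow hp1, norm_ofReal_cpow hp2]
  simp only [Complex.sub_re, Complex.one_re]
  calc ‖f ![0,0,p.1,e*p.2]‖ * p.1 ^ (z₁.re-1) * p.2 ^ (z₂.re-1)
      ≤ (C * ((1+|p.1|)^k)⁻¹ * ((1+|p.2|)^k)⁻¹) * p.1 ^ (z₁.re-1) * p.2 ^ (z₂.re-1) := by
        exact mul_le_mul_of_nonneg_right (mul_le_mul_of_nonneg_right (hC p.1 p.2)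
          (Real.rpow_nonneg hp1.le _)) (Real.rpow_nonneg hp2.le _)
    _ = (C * (((1+|p.1|)^k)⁻¹ * p.1 ^ (z₁.re-1))) * (((1+|p.2|)^k)⁻¹ * p.2 ^ (z₂.re-1)) := by
        ring


/-- Generic: continuous rapidly decaying function has differentiable Mellin transform. -/
lemma mellin_diff_of_decay {φ : ℝ → ℂ} (hc : Continuous φ)
    (hd : ∀ k : ℕ, ∃ C, 0 ≤ C ∧ ∀ t : ℝ, ‖φ t‖ ≤ C * ((1+|t|)^k)⁻¹) {z : ℂ}
    (hz : 0 < z.re) : DifferentiableAt ℂ (mellin φ) z := by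
  set k : ℕ := ⌊z.re⌋₊ + 1 with hk
  have hzk : z.re < k := by rw [hk]; push_cast; exact Nat.lt_floor_add_one _
  obtain ⟨C, hC0, hC⟩ := hd k
  obtain ⟨C0, hC00, hC0'⟩ := hd 0
  refine mellin_differentiableAt_of_isBigO_rpow (a := k) (b := 0)
    (hc.locallyIntegrable.locallyIntegrableOn _) ?_ hzk ?_ hz
  · refine Asymptotics.IsBigO.of_bound C ?_
    filter_upwards [eventually_ge_atTop (1:ℝ)] with t ht
    have ht0 : (0:ℝ) < t := lt_of_lt_of_le one_pos ht
    have h1 : ‖(t:ℝ) ^ (-(k:ℝ))‖ = (t ^ k)⁻¹ := by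
      rw [Real.norm_eq_abs, _root_.abs_of_nonneg (Real.rpow_nonneg ht0.le _),
        Real.rpow_neg ht0.le, Real.rpow_natCast]
    rw [h1]
    refine (hC t).trans ?_
    gcongr
    · rw [_root_.abs_of_nonneg ht0.le]; linarith
  · refine Asymptotics.IsBigO.of_bound C0 ?_
    filter_upwards [self_mem_nhdsWithin] with t (ht : (0:ℝ) < t)
    have h1 : ‖(t:ℝ) ^ (-(0:ℝ))‖ = 1 := by
      rw [neg_zero, Real.rpow_zero, norm_one]
    rw [h1, mul_one]
    simpa using hC0' t


/-- Uniform bound for the inner integral. -/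
lemma inner_bound {h : ℝ → ℝ → ℂ}
    (hd : ∀ k : ℕ, ∃ C, 0 ≤ C ∧ ∀ t u : ℝ, ‖h t u‖ ≤ C * ((1+|t|)^k)⁻¹ * ((1+|u|)^k)⁻¹)
    {w : ℂ} (hw : 0 < w.re) (k : ℕ) :
    ∃ C, 0 ≤ C ∧ ∀ t : ℝ, ‖∫ u in Ioi (0:ℝ), h t u * (u:ℂ)^(w-1)‖ ≤ C * ((1+|t|)^k)⁻¹ := by
  set k' : ℕ := max k (⌊w.re⌋₊ + 1) with hk'
  have hwk : w.re < k' := by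
    have : w.re < (⌊w.re⌋₊ + 1 : ℕ) := by push_cast; exact Nat.lt_floor_add_one _
    exact lt_of_lt_of_le this (by exact_mod_cast le_max_right _ _)
  have hkk : k ≤ k' := le_max_left _ _
  obtain ⟨C, hC0, hC⟩ := hd k'
  have hKi : IntegrableOn (fun u : ℝ => ((1+|u|)^k')⁻¹ * u ^ (w.re-1)) (Ioi 0) :=
    Kint hw hwk
  set K : ℝ := ∫ u in Ioi (0:ℝ), ((1+|u|)^k')⁻¹ * u ^ (w.re-1) with hK
  have hK0 : 0 ≤ K := by
    apply setIntegral_nonneg measurableSet_Ioi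
    intro u hu
    have : (0:ℝ) < u := hu
    positivity
  refine ⟨C * K, by positivity, fun t => ?_⟩
  have habs : ‖∫ u in Ioi (0:ℝ), h t u * (u:ℂ)^(w-1)‖ ≤
      ∫ u in Ioi (0:ℝ), (C * ((1+|t|)^k')⁻¹) * (((1+|u|)^k')⁻¹ * u ^ (w.re-1)) := by
    apply norm_integral_le_of_norm_le ((hKi.const_mul _))
    filter_upwards [ae_restrict_mem measurableSet_Ioi] with u hu
    have hu0 : (0:ℝ) < u := hu
    rw [norm_mul, norm_ofReal_cpow hu0]
    simp only [Complex.sub_re, Complex.one_re]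
    calc ‖h t u‖ * u ^ (w.re-1)
        ≤ (C * ((1+|t|)^k')⁻¹ * ((1+|u|)^k')⁻¹) * u ^ (w.re-1) :=
          mul_le_mul_of_nonneg_right (hC t u) (Real.rpow_nonneg hu0.le _)
      _ = (C * ((1+|t|)^k')⁻¹) * (((1+|u|)^k')⁻¹ * u ^ (w.re-1)) := by ring
  rw [integral_const_mul] at habs
  refine habs.trans ?_
  rw [mul_assoc, mul_comm (((1+|t|)^k')⁻¹) K, ← mul_assoc]
  have hinv : ((1+|t|)^k')⁻¹ ≤ ((1+|t|)^k)⁻¹ := by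
    apply inv_anti₀ (by positivity)
    exact pow_le_pow_right₀ (by simp [abs_nonneg]) hkk
  exact mul_le_mul_of_nonneg_left hinv (by positivity)

/-- Continuity of the inner integral. -/
lemma inner_cont {h : ℝ → ℝ → ℂ} (hc : Continuous fun p : ℝ × ℝ => h p.1 p.2)
    (hd : ∀ k : ℕ, ∃ C, 0 ≤ C ∧ ∀ t u : ℝ, ‖h t u‖ ≤ C * ((1+|t|)^k)⁻¹ * ((1+|u|)^k)⁻¹)
    {w : ℂ} (hw : 0 < w.re) :
    Continuous fun t : ℝ => ∫ u in Ioi (0:ℝ), h t u * (u:ℂ)^(w-1) := by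
  set k' : ℕ := ⌊w.re⌋₊ + 1 with hk'
  have hwk : w.re < k' := by rw [hk']; push_cast; exact Nat.lt_floor_add_one _
  obtain ⟨C, hC0, hC⟩ := hd k'
  apply continuous_of_dominated (bound := fun u => C * (((1+|u|)^k')⁻¹ * u ^ (w.re-1)))
  · intro t
    exact ((hc.comp (continuous_const.prodMk continuous_id)).aestronglyMeasurable.restrict).mul
      ((cpow_contOn (w-1)).aestronglyMeasurable measurableSet_Ioi)
  · intro t
    filter_upwards [ae_restrict_mem measurableSet_Ioi] with u hu
    have hu0 : (0:ℝ) < u := hu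
    rw [norm_mul, norm_ofReal_cpow hu0]
    simp only [Complex.sub_re, Complex.one_re]
    calc ‖h t u‖ * u ^ (w.re-1)
        ≤ (C * ((1+|t|)^k')⁻¹ * ((1+|u|)^k')⁻¹) * u ^ (w.re-1) :=
          mul_le_mul_of_nonneg_right (hC t u) (Real.rpow_nonneg hu0.le _)
      _ ≤ (C * 1 * ((1+|u|)^k')⁻¹) * u ^ (w.re-1) := by
          gcongr
          rw [inv_le_one_iff₀]; right
          exact one_le_pow₀ (by simp [abs_nonneg])
      _ = C * (((1+|u|)^k')⁻¹ * u ^ (w.re-1)) := by ring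
  · exact (Kint hw hwk).const_mul C
  · filter_upwards [ae_restrict_mem measurableSet_Ioi] with u hu
    exact (hc.comp (continuous_id.prodMk continuous_const)).mul continuous_const

lemma measure_eq :
    (volume : Measure (ℝ×ℝ)).restrict (Ioi (0:ℝ) ×ˢ Ioi (0:ℝ)) =
      (volume.restrict (Ioi (0:ℝ))).prod (volume.restrict (Ioi (0:ℝ))) := by
  rw [Measure.volume_eq_prod, Measure.prod_restrict]

lemma sigma2_eq_u_inner (f : SchwartzMap (Fin 4 → ℝ) ℂ) {e : ℝ} (he : |e| = 1) {z₁ z₂ : ℂ}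
    (h₁ : 0 < z₁.re) (h₂ : 0 < z₂.re) :
    Sigma2 (⇑f) e z₁ z₂ =
      ∫ t in Ioi (0:ℝ), (∫ u in Ioi (0:ℝ), f ![0,0,t,e*u] * (u:ℂ)^(z₂-1)) * (t:ℂ)^(z₁-1) := by
  have hint := key_int f he h₁ h₂
  rw [IntegrableOn, measure_eq] at hint
  rw [Sigma2, measure_eq, integral_prod _ hint]
  congr 1; funext t
  rw [← integral_mul_const]
  congr 1; funext u; ring

lemma sigma2_eq_t_inner (f : SchwartzMap (Fin 4 → ℝ) ℂ) {e : ℝ} (he : |e| = 1) {z₁ z₂ : ℂ}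
    (h₁ : 0 < z₁.re) (h₂ : 0 < z₂.re) :
    Sigma2 (⇑f) e z₁ z₂ =
      ∫ u in Ioi (0:ℝ), (∫ t in Ioi (0:ℝ), f ![0,0,t,e*u] * (t:ℂ)^(z₁-1)) * (u:ℂ)^(z₂-1) := by
  have hint := key_int f he h₁ h₂
  rw [IntegrableOn, measure_eq] at hint
  rw [Sigma2, measure_eq, integral_prod_symm _ hint]
  congr 1; funext u
  rw [← integral_mul_const]

lemma sigma2_eq_mellinG (f : SchwartzMap (Fin 4 → ℝ) ℂ) {e : ℝ} (he : |e| = 1) {z₁ z₂ : ℂ}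
    (h₁ : 0 < z₁.re) (h₂ : 0 < z₂.re) :
    Sigma2 (⇑f) e z₁ z₂ =
      mellin (fun t => ∫ u in Ioi (0:ℝ), f ![0,0,t,e*u] * (u:ℂ)^(z₂-1)) z₁ := by
  rw [sigma2_eq_u_inner f he h₁ h₂, mellin]
  congr 1; funext t
  rw [smul_eq_mul, mul_comm]

lemma sigma2_eq_mellinH (f : SchwartzMap (Fin 4 → ℝ) ℂ) {e : ℝ} (he : |e| = 1) {z₁ z₂ : ℂ}
    (h₁ : 0 < z₁.re) (h₂ : 0 < z₂.re) :
    Sigma2 (⇑f) e z₁ z₂ =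
      mellin (fun u => ∫ t in Ioi (0:ℝ), f ![0,0,t,e*u] * (t:ℂ)^(z₁-1)) z₂ := by
  rw [sigma2_eq_t_inner f he h₁ h₂, mellin]
  congr 1; funext u
  rw [smul_eq_mul, mul_comm]

lemma diff1 (f : SchwartzMap (Fin 4 → ℝ) ℂ) {e : ℝ} (he : |e| = 1) {z₁ z₂ : ℂ}
    (h₁ : 0 < z₁.re) (h₂ : 0 < z₂.re) :
    DifferentiableAt ℂ (fun z => Sigma2 (⇑f) e z z₂) z₁ := by
  have heq : (fun z => Sigma2 (⇑f) e z z₂) =ᶠ[nhds z₁]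
      mellin (fun t => ∫ u in Ioi (0:ℝ), f ![0,0,t,e*u] * (u:ℂ)^(z₂-1)) := by
    have hop : ∀ᶠ z in nhds z₁, 0 < z.re :=
      (isOpen_lt continuous_const Complex.continuous_re).eventually_mem h₁
    filter_upwards [hop] with z hz
    exact sigma2_eq_mellinG f he hz h₂
  rw [heq.differentiableAt_iff]
  exact mellin_diff_of_decay
    (inner_cont ((f.continuous.comp (contVec e)).comp
      (continuous_fst.prodMk continuous_snd)) (fun k => decay he f k) h₂)
    (fun k => inner_bound (fun k => decay he f k) h₂ k) h₁

lemma decay_swap {e : ℝ} (he : |e| = 1) (f : SchwartzMap (Fin 4 → ℝ) ℂ) (k : ℕ) :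
    ∃ C : ℝ, 0 ≤ C ∧ ∀ u t : ℝ,
      ‖f ![0,0,t,e*u]‖ ≤ C * ((1+|u|)^k)⁻¹ * ((1+|t|)^k)⁻¹ := by
  obtain ⟨C, hC0, hC⟩ := decay he f k
  exact ⟨C, hC0, fun u t => by have := hC t u; linarith [hC t u, mul_right_comm C ((1+|t|)^k)⁻¹ ((1+|u|)^k)⁻¹]⟩

lemma diff2 (f : SchwartzMap (Fin 4 → ℝ) ℂ) {e : ℝ} (he : |e| = 1) {z₁ z₂ : ℂ}
    (h₁ : 0 < z₁.re) (h₂ : 0 < z₂.re) :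
    DifferentiableAt ℂ (fun z => Sigma2 (⇑f) e z₁ z) z₂ := by
  have heq : (fun z => Sigma2 (⇑f) e z₁ z) =ᶠ[nhds z₂]
      mellin (fun u => ∫ t in Ioi (0:ℝ), f ![0,0,t,e*u] * (t:ℂ)^(z₁-1)) := by
    have hop : ∀ᶠ z in nhds z₂, 0 < z.re :=
      (isOpen_lt continuous_const Complex.continuous_re).eventually_mem h₂
    filter_upwards [hop] with z hz
    exact sigma2_eq_mellinH f he h₁ hz
  rw [heq.differentiableAt_iff]
  exact mellin_diff_of_decay
    (inner_cont (h := fun u t => f ![0,0,t,e*u])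
      ((f.continuous.comp (contVec e)).comp
        (continuous_snd.prodMk continuous_fst)) (decay_swap he f) h₁)
    (fun k => inner_bound (h := fun u t => f ![0,0,t,e*u]) (decay_swap he f) h₁ k) h₂

lemma mellin_eq (φ : ℝ → ℂ) (z : ℂ) :
    ∫ x in Ioi (0:ℝ), φ x * (x:ℂ)^(z-1) = mellin φ z := by
  rw [mellin]; congr 1; funext x; rw [smul_eq_mul, mul_comm]

lemma dilation (f g : SchwartzMap (Fin 4 → ℝ) ℂ) {e : ℝ} (he : |e| = 1) {t : ℝ}
    (ht : 0 < t) (hg : ∀ x, g x = f (t • x)) {z₁ z₂ : ℂ}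
    (h₁ : 0 < z₁.re) (h₂ : 0 < z₂.re) :
    Sigma2 (⇑g) e z₁ z₂ = (t:ℂ) ^ (-z₁ - z₂) * Sigma2 (⇑f) e z₁ z₂ := by
  set ψ : ℝ → ℂ := fun w => mellin (fun a => (f ![0,0,a,e*w] : ℂ)) z₁ with hψ
  have hgf : ∀ a b : ℝ, g ![0,0,a,e*b] = f ![0,0,t*a,e*(t*b)] := by
    intro a b
    rw [hg]
    congr 1
    funext i
    fin_cases i <;> simp [smul_eq_mul] <;> ring
  have hfmell : Sigma2 (⇑f) e z₁ z₂ = mellin ψ z₂ := by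
    rw [sigma2_eq_t_inner f he h₁ h₂, ← mellin_eq ψ z₂]
    congr 1; funext u
    congr 1
    exact mellin_eq _ _
  have step : Sigma2 (⇑g) e z₁ z₂ =
      ∫ u in Ioi (0:ℝ), ((t:ℂ)^(-z₁) * ψ (t*u)) * (u:ℂ)^(z₂-1) := by
    rw [sigma2_eq_t_inner g he h₁ h₂]
    congr 1; funext u
    congr 1
    rw [mellin_eq _ z₁]
    have : (fun a => (g ![0,0,a,e*u] : ℂ)) = fun a => f ![0,0,t*a,e*(t*u)] := by
      funext a; exact hgf a u
    rw [this]
    have := mellin_comp_mul_left (fun a => (f ![0,0,a,e*(t*u)] : ℂ)) z₁ ht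
    rw [this, smul_eq_mul]
  rw [step]
  simp_rw [mul_assoc, integral_const_mul]
  rw [mellin_eq (fun u => ψ (t*u)) z₂, mellin_comp_mul_left ψ z₂ ht, smul_eq_mul,
    hfmell]
  have htne : (t:ℂ) ≠ 0 := Complex.ofReal_ne_zero.mpr ht.ne'
  rw [show -z₁ - z₂ = -z₁ + -z₂ by ring, Complex.cpow_add _ _ htne]
  ring

/-- One-variable Mellin integration by parts for decaying functions. -/
lemma mellin_IBP {h h' : ℝ → ℂ} (hder : ∀ x : ℝ, HasDerivAt h (h' x) x)
    {C : ℝ} {k : ℕ} (hb : ∀ x, ‖h x‖ ≤ C * ((1+|x|)^k)⁻¹)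
    (hb' : ∀ x, ‖h' x‖ ≤ C * ((1+|x|)^k)⁻¹)
    (hc' : Continuous h') {z : ℂ} (hz : 0 < z.re) (hk : z.re + 1 < k) :
    z * ∫ x in Ioi (0:ℝ), h x * (x:ℂ)^(z-1) = - ∫ x in Ioi (0:ℝ), h' x * (x:ℂ)^z := by
  have hc : Continuous h :=
    Differentiable.continuous (fun x => (hder x).differentiableAt)
  have hkz : z.re < k := by linarith
  have hk1 : (z+1).re < k := by simp [Complex.add_re]; linarith
  have hz1 : 0 < (z+1).re := by simp [Complex.add_re]; linarith
  set Φ : ℝ → ℂ := fun x => h x * (x:ℂ)^z with hΦ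
  have hzne : z ≠ 0 := fun hh => by simp [hh] at hz
  have hΦ0 : Φ 0 = 0 := by
    show h 0 * ((0:ℝ):ℂ)^z = 0
    rw [Complex.ofReal_zero, Complex.zero_cpow hzne, mul_zero]
  -- derivative of Φ on Ioi 0
  have hΦder : ∀ x ∈ Ioi (0:ℝ), HasDerivAt Φ (h' x * (x:ℂ)^z + h x * (z * (x:ℂ)^(z-1))) x := by
    intro x hx
    have hx0 : (0:ℝ) < x := hx
    have hcpow : HasDerivAt (fun y : ℝ => ((y:ℂ))^z) (z * (x:ℂ)^(z-1)) x := by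
      have hslit : ((x:ℂ)) ∈ Complex.slitPlane := Or.inl (by simpa using hx0)
      have h1 : HasDerivAt (fun w : ℂ => w ^ z) (z * (x:ℂ)^(z-1) * 1) (x:ℂ) :=
        (hasDerivAt_id ((x:ℂ))).cpow_const hslit
      simpa using h1.comp_ofReal
    exact (hder x).mul hcpow
  -- integrability of both pieces
  have hint1 : IntegrableOn (fun x => h' x * (x:ℂ)^z) (Ioi (0:ℝ)) := by
    have := int1d hc' hb' hz1 hk1
    simpa using this
  have hint2 : IntegrableOn (fun x => h x * (x:ℂ)^(z-1)) (Ioi (0:ℝ)) :=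
    int1d hc hb hz hkz
  have hint2' : IntegrableOn (fun x => h x * (z * (x:ℂ)^(z-1))) (Ioi (0:ℝ)) := by
    have h1 : IntegrableOn (fun x => z * (h x * (x:ℂ)^(z-1))) (Ioi (0:ℝ)) :=
      hint2.const_mul z
    refine h1.congr_fun (fun x _ => by ring) measurableSet_Ioi
  have hintsum : IntegrableOn (fun x => h' x * (x:ℂ)^z + h x * (z * (x:ℂ)^(z-1)))
      (Ioi (0:ℝ)) := hint1.add hint2'
  -- limit at infinity
  have htop : Tendsto Φ atTop (nhds 0) := by
    have htend : Tendsto (fun x : ℝ => C * x ^ (z.re - k)) atTop (nhds 0) := by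
      have h0 : Tendsto (fun x : ℝ => x ^ (-((k:ℝ) - z.re))) atTop (nhds 0) :=
        tendsto_rpow_neg_atTop (by linarith)
      rw [neg_sub] at h0
      simpa using h0.const_mul C
    refine squeeze_zero_norm' ?_ htend
    · filter_upwards [eventually_ge_atTop (1:ℝ)] with x hx1
      have hx0 : (0:ℝ) < x := lt_of_lt_of_le one_pos hx1
      rw [hΦ, norm_mul, norm_ofReal_cpow hx0]
      have hxk : x ^ (k:ℝ) ≤ (1+|x|)^k := by
        rw [← Real.rpow_natCast (1+|x|) k]
        exact Real.rpow_le_rpow hx0.le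
          (by rw [_root_.abs_of_nonneg hx0.le]; linarith) (Nat.cast_nonneg k)
      calc ‖h x‖ * x ^ z.re ≤ (C * ((1+|x|)^k)⁻¹) * x ^ z.re :=
            mul_le_mul_of_nonneg_right (hb x) (Real.rpow_nonneg hx0.le _)
        _ ≤ (C * (x ^ (k:ℝ))⁻¹) * x ^ z.re := by
            have hC0 : 0 ≤ C := by
              have h1 := (norm_nonneg (h 0)).trans (hb 0)
              simpa using h1
            have : ((1+|x|)^k)⁻¹ ≤ (x ^ (k:ℝ))⁻¹ :=
              inv_anti₀ (Real.rpow_pos_of_pos hx0 _) hxk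
            exact mul_le_mul_of_nonneg_right
              (mul_le_mul_of_nonneg_left this hC0) (Real.rpow_nonneg hx0.le _)
        _ = C * x ^ (z.re - k) := by
            rw [mul_assoc, ← Real.rpow_neg hx0.le, ← Real.rpow_add hx0]; ring_nf
  -- continuity at 0 from the right
  have hcont0 : ContinuousWithinAt Φ (Ici (0:ℝ)) 0 := by
    apply ContinuousAt.continuousWithinAt
    exact hc.continuousAt.mul (Complex.continuousAt_ofReal_cpow_const 0 z (Or.inl hz))
  have hFTC := integral_Ioi_of_hasDerivAt_of_tendsto hcont0 hΦder hintsum htop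
  rw [hΦ0, sub_zero] at hFTC
  have hsplit : ∫ x in Ioi (0:ℝ), (h' x * (x:ℂ)^z + h x * (z * (x:ℂ)^(z-1)))
      = (∫ x in Ioi (0:ℝ), h' x * (x:ℂ)^z) + z * ∫ x in Ioi (0:ℝ), h x * (x:ℂ)^(z-1) := by
    rw [integral_add hint1 hint2']
    congr 1
    rw [← integral_const_mul]
    congr 1; funext x; ring
  rw [hsplit] at hFTC
  linear_combination hFTC

lemma hasDerivAt_slice_t (f : SchwartzMap (Fin 4 → ℝ) ℂ) (e u : ℝ) (x : ℝ) :
    HasDerivAt (fun t => f ![0,0,t,e*u])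
      ((LineDeriv.lineDerivOpCLM ℝ (SchwartzMap (Fin 4 → ℝ) ℂ) (![0,0,1,0] : Fin 4 → ℝ) f) ![0,0,x,e*u]) x := by
  have hγ : ∀ t : ℝ, ((![0,0,(0:ℝ),e*u] : Fin 4 → ℝ) + t • (![0,0,1,0] : Fin 4 → ℝ))
      = ![0,0,t,e*u] := by
    intro t; funext i; fin_cases i <;> simp
  have hγd : HasDerivAt (fun t : ℝ => (![0,0,(0:ℝ),e*u] : Fin 4 → ℝ) + t • (![0,0,1,0] : Fin 4 → ℝ))
      (![0,0,1,0] : Fin 4 → ℝ) x := by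
    simpa using ((hasDerivAt_id x).smul_const (![0,0,1,0] : Fin 4 → ℝ)).const_add
      (![0,0,(0:ℝ),e*u] : Fin 4 → ℝ)
  have hcomp : HasDerivAt
      (fun t : ℝ => f ((![0,0,(0:ℝ),e*u] : Fin 4 → ℝ) + t • (![0,0,1,0] : Fin 4 → ℝ)))
      ((fderiv ℝ f (![0,0,x,e*u])) (![0,0,1,0] : Fin 4 → ℝ)) x := by
    have hfd : HasFDerivAt (⇑f) (fderiv ℝ f (![0,0,x,e*u]))
        ((![0,0,(0:ℝ),e*u] : Fin 4 → ℝ) + x • (![0,0,1,0] : Fin 4 → ℝ)) := by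
      rw [hγ x]; exact f.differentiableAt.hasFDerivAt
    exact hfd.comp_hasDerivAt x hγd
  have hfun : (fun t : ℝ => f ((![0,0,(0:ℝ),e*u] : Fin 4 → ℝ) + t • (![0,0,1,0] : Fin 4 → ℝ)))
      = fun t => f ![0,0,t,e*u] := by funext t; rw [hγ t]
  rw [hfun] at hcomp
  simpa [LineDeriv.lineDerivOpCLM_apply, SchwartzMap.lineDerivOp_apply_eq_fderiv] using hcomp

lemma hasDerivAt_slice_u (f : SchwartzMap (Fin 4 → ℝ) ℂ) (e t : ℝ) (x : ℝ) :
    HasDerivAt (fun u => f ![0,0,t,e*u])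
      ((e:ℂ) * (LineDeriv.lineDerivOpCLM ℝ (SchwartzMap (Fin 4 → ℝ) ℂ) (![0,0,0,1] : Fin 4 → ℝ) f) ![0,0,t,e*x]) x := by
  have hγ : ∀ u : ℝ, ((![0,0,t,(0:ℝ)] : Fin 4 → ℝ) + u • (![0,0,0,e] : Fin 4 → ℝ))
      = ![0,0,t,e*u] := by
    intro u; funext i; fin_cases i <;> simp [mul_comm]
  have hγd : HasDerivAt (fun u : ℝ => (![0,0,t,(0:ℝ)] : Fin 4 → ℝ) + u • (![0,0,0,e] : Fin 4 → ℝ))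
      (![0,0,0,e] : Fin 4 → ℝ) x := by
    simpa using ((hasDerivAt_id x).smul_const (![0,0,0,e] : Fin 4 → ℝ)).const_add
      (![0,0,t,(0:ℝ)] : Fin 4 → ℝ)
  have hcomp : HasDerivAt
      (fun u : ℝ => f ((![0,0,t,(0:ℝ)] : Fin 4 → ℝ) + u • (![0,0,0,e] : Fin 4 → ℝ)))
      ((fderiv ℝ f (![0,0,t,e*x])) (![0,0,0,e] : Fin 4 → ℝ)) x := by
    have hfd : HasFDerivAt (⇑f) (fderiv ℝ f (![0,0,t,e*x]))
        ((![0,0,t,(0:ℝ)] : Fin 4 → ℝ) + x • (![0,0,0,e] : Fin 4 → ℝ)) := by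
      rw [hγ x]; exact f.differentiableAt.hasFDerivAt
    exact hfd.comp_hasDerivAt x hγd
  have hfun : (fun u : ℝ => f ((![0,0,t,(0:ℝ)] : Fin 4 → ℝ) + u • (![0,0,0,e] : Fin 4 → ℝ)))
      = fun u => f ![0,0,t,e*u] := by funext u; rw [hγ u]
  rw [hfun] at hcomp
  have hsmul : (![0,0,0,e] : Fin 4 → ℝ) = e • (![0,0,0,1] : Fin 4 → ℝ) := by
    funext i; fin_cases i <;> simp
  rw [hsmul, ContinuousLinearMap.map_smul] at hcomp
  simpa [LineDeriv.lineDerivOpCLM_apply, SchwartzMap.lineDerivOp_apply_eq_fderiv, Complex.real_smul] using hcomp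

lemma bound_one {u : ℝ} {k : ℕ} : ((1+|u|)^k)⁻¹ ≤ 1 := by
  rw [inv_le_one_iff₀]; right
  exact one_le_pow₀ (by simp [abs_nonneg])

lemma step_t (f : SchwartzMap (Fin 4 → ℝ) ℂ) {e : ℝ} (he : |e| = 1) {z₁ z₂ : ℂ}
    (h₁ : 0 < z₁.re) (h₂ : 0 < z₂.re) :
    z₁ * Sigma2 (⇑f) e z₁ z₂ =
      - Sigma2 (⇑(LineDeriv.lineDerivOpCLM ℝ (SchwartzMap (Fin 4 → ℝ) ℂ) (![0,0,1,0] : Fin 4 → ℝ) f)) e (z₁+1) z₂ := by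
  set f₂ := LineDeriv.lineDerivOpCLM ℝ (SchwartzMap (Fin 4 → ℝ) ℂ) (![0,0,1,0] : Fin 4 → ℝ) f with hf₂
  set k : ℕ := ⌊z₁.re⌋₊ + 2 with hk
  have hkz : z₁.re + 1 < k := by
    rw [hk]; push_cast; have := Nat.lt_floor_add_one z₁.re; linarith
  obtain ⟨C₁, hC₁0, hC₁⟩ := decay he f k
  obtain ⟨C₂, hC₂0, hC₂⟩ := decay he f₂ k
  set C := max C₁ C₂ with hCdef
  have key : ∀ u : ℝ, z₁ * ∫ t in Ioi (0:ℝ), f ![0,0,t,e*u] * (t:ℂ)^(z₁-1)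
      = - ∫ t in Ioi (0:ℝ), f₂ ![0,0,t,e*u] * (t:ℂ)^z₁ := by
    intro u
    refine mellin_IBP (fun x => hasDerivAt_slice_t f e u x) (C := C) (k := k)
      ?_ ?_ (f₂.continuous.comp (contVec1 e u)) h₁ hkz
    · intro x
      calc ‖f ![0,0,x,e*u]‖ ≤ C₁ * ((1+|x|)^k)⁻¹ * ((1+|u|)^k)⁻¹ := hC₁ x u
        _ ≤ C * ((1+|x|)^k)⁻¹ * 1 := by
            gcongr
            · exact le_max_left _ _
            · exact bound_one
        _ = C * ((1+|x|)^k)⁻¹ := mul_one _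
    · intro x
      calc ‖f₂ ![0,0,x,e*u]‖ ≤ C₂ * ((1+|x|)^k)⁻¹ * ((1+|u|)^k)⁻¹ := hC₂ x u
        _ ≤ C * ((1+|x|)^k)⁻¹ * 1 := by
            gcongr
            · exact le_max_right _ _
            · exact bound_one
        _ = C * ((1+|x|)^k)⁻¹ := mul_one _
  have h₁' : 0 < (z₁+1).re := by
    rw [Complex.add_re, Complex.one_re]; linarith
  rw [sigma2_eq_t_inner f he h₁ h₂, sigma2_eq_t_inner f₂ he h₁' h₂,
    ← integral_const_mul, ← integral_neg]
  congr 1; funext u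
  rw [← mul_assoc, key u, show z₁ + 1 - 1 = z₁ from add_sub_cancel_right z₁ 1, neg_mul]

lemma step_u (f : SchwartzMap (Fin 4 → ℝ) ℂ) {e : ℝ} (he : |e| = 1) {z₁ z₂ : ℂ}
    (h₁ : 0 < z₁.re) (h₂ : 0 < z₂.re) :
    z₂ * Sigma2 (⇑f) e z₁ z₂ =
      (-(e:ℂ)) * Sigma2 (⇑(LineDeriv.lineDerivOpCLM ℝ (SchwartzMap (Fin 4 → ℝ) ℂ) (![0,0,0,1] : Fin 4 → ℝ) f)) e z₁ (z₂+1) := by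
  set f₃ := LineDeriv.lineDerivOpCLM ℝ (SchwartzMap (Fin 4 → ℝ) ℂ) (![0,0,0,1] : Fin 4 → ℝ) f with hf₃
  set k : ℕ := ⌊z₂.re⌋₊ + 2 with hk
  have hkz : z₂.re + 1 < k := by
    rw [hk]; push_cast; have := Nat.lt_floor_add_one z₂.re; linarith
  obtain ⟨C₁, hC₁0, hC₁⟩ := decay he f k
  obtain ⟨C₂, hC₂0, hC₂⟩ := decay he f₃ k
  set C := max C₁ C₂ with hCdef
  have key : ∀ t : ℝ, z₂ * ∫ u in Ioi (0:ℝ), f ![0,0,t,e*u] * (u:ℂ)^(z₂-1)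
      = - ∫ u in Ioi (0:ℝ), ((e:ℂ) * f₃ ![0,0,t,e*u]) * (u:ℂ)^z₂ := by
    intro t
    refine mellin_IBP (fun x => hasDerivAt_slice_u f e t x) (C := C) (k := k)
      ?_ ?_ (continuous_const.mul (f₃.continuous.comp (by
        apply continuous_pi; intro i; fin_cases i <;> simp <;> fun_prop))) h₂ hkz
    · intro x
      calc ‖f ![0,0,t,e*x]‖ ≤ C₁ * ((1+|t|)^k)⁻¹ * ((1+|x|)^k)⁻¹ := hC₁ t x
        _ ≤ C * 1 * ((1+|x|)^k)⁻¹ := by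
            gcongr
            · exact le_max_left _ _
            · exact bound_one
        _ = C * ((1+|x|)^k)⁻¹ := by rw [mul_one]
    · intro x
      rw [norm_mul, Complex.norm_real, Real.norm_eq_abs, he, one_mul]
      calc ‖f₃ ![0,0,t,e*x]‖ ≤ C₂ * ((1+|t|)^k)⁻¹ * ((1+|x|)^k)⁻¹ := hC₂ t x
        _ ≤ C * 1 * ((1+|x|)^k)⁻¹ := by
            gcongr
            · exact le_max_right _ _
            · exact bound_one
        _ = C * ((1+|x|)^k)⁻¹ := by rw [mul_one]
  have h₂' : 0 < (z₂+1).re := by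
    rw [Complex.add_re, Complex.one_re]; linarith
  rw [sigma2_eq_u_inner f he h₁ h₂, sigma2_eq_u_inner f₃ he h₁ h₂',
    ← integral_const_mul, ← integral_const_mul]
  congr 1; funext t
  rw [← mul_assoc, ← mul_assoc]
  congr 1
  have hpull : ∫ u in Ioi (0:ℝ), ((e:ℂ) * f₃ ![0,0,t,e*u]) * (u:ℂ)^z₂
      = (e:ℂ) * ∫ u in Ioi (0:ℝ), f₃ ![0,0,t,e*u] * (u:ℂ)^z₂ := by
    rw [← integral_const_mul]; congr 1; funext u; ring
  rw [key t, hpull, show z₂ + 1 - 1 = z₂ from add_sub_cancel_right z₂ 1, neg_mul]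

noncomputable def D2 : SchwartzMap (Fin 4 → ℝ) ℂ → SchwartzMap (Fin 4 → ℝ) ℂ :=
  fun φ => LineDeriv.lineDerivOpCLM ℝ (SchwartzMap (Fin 4 → ℝ) ℂ) (![0,0,1,0] : Fin 4 → ℝ) φ

noncomputable def D3 : SchwartzMap (Fin 4 → ℝ) ℂ → SchwartzMap (Fin 4 → ℝ) ℂ :=
  fun φ => LineDeriv.lineDerivOpCLM ℝ (SchwartzMap (Fin 4 → ℝ) ℂ) (![0,0,0,1] : Fin 4 → ℝ) φ

lemma iter_t (n : ℕ) (f : SchwartzMap (Fin 4 → ℝ) ℂ) {e : ℝ} (he : |e| = 1) {z₁ z₂ : ℂ}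
    (h₁ : 0 < z₁.re) (h₂ : 0 < z₂.re) :
    (∏ j ∈ Finset.range n, (z₁ + j)) * Sigma2 (⇑f) e z₁ z₂
      = (-1)^n * Sigma2 (⇑(D2^[n] f)) e (z₁ + n) z₂ := by
  induction n with
  | zero => simp
  | succ n ih =>
    have h₁n : 0 < (z₁ + n).re := by
      rw [Complex.add_re, Complex.natCast_re]
      have : (0:ℝ) ≤ n := Nat.cast_nonneg n
      linarith
    have hstep := step_t (D2^[n] f) he h₁n h₂
    rw [Finset.prod_range_succ]
    calc (∏ j ∈ Finset.range n, (z₁ + j)) * (z₁ + n) * Sigma2 (⇑f) e z₁ z₂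
        = (z₁ + n) * ((∏ j ∈ Finset.range n, (z₁ + j)) * Sigma2 (⇑f) e z₁ z₂) := by ring
      _ = (z₁ + n) * ((-1)^n * Sigma2 (⇑(D2^[n] f)) e (z₁ + n) z₂) := by rw [ih]
      _ = (-1)^n * ((z₁ + n) * Sigma2 (⇑(D2^[n] f)) e (z₁ + n) z₂) := by ring
      _ = (-1)^n * (- Sigma2 (⇑(LineDeriv.lineDerivOpCLM ℝ (SchwartzMap (Fin 4 → ℝ) ℂ) (![0,0,1,0] : Fin 4 → ℝ)
            (D2^[n] f))) e (z₁ + n + 1) z₂) := by rw [hstep]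
      _ = (-1)^(n+1) * Sigma2 (⇑(D2^[n+1] f)) e (z₁ + (n+1 : ℕ)) z₂ := by
          rw [Function.iterate_succ_apply' D2 n f]
          have : z₁ + ((n+1 : ℕ) : ℂ) = z₁ + n + 1 := by push_cast; ring
          rw [this, D2]
          ring

lemma iter_u (m : ℕ) (f : SchwartzMap (Fin 4 → ℝ) ℂ) {e : ℝ} (he : |e| = 1) {z₁ z₂ : ℂ}
    (h₁ : 0 < z₁.re) (h₂ : 0 < z₂.re) :
    (∏ j ∈ Finset.range m, (z₂ + j)) * Sigma2 (⇑f) e z₁ z₂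
      = (-(e:ℂ))^m * Sigma2 (⇑(D3^[m] f)) e z₁ (z₂ + m) := by
  induction m with
  | zero => simp
  | succ m ih =>
    have h₂m : 0 < (z₂ + m).re := by
      rw [Complex.add_re, Complex.natCast_re]
      have : (0:ℝ) ≤ m := Nat.cast_nonneg m
      linarith
    have hstep := step_u (D3^[m] f) he h₁ h₂m
    rw [Finset.prod_range_succ]
    calc (∏ j ∈ Finset.range m, (z₂ + j)) * (z₂ + m) * Sigma2 (⇑f) e z₁ z₂
        = (z₂ + m) * ((∏ j ∈ Finset.range m, (z₂ + j)) * Sigma2 (⇑f) e z₁ z₂) := by ring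
      _ = (z₂ + m) * ((-(e:ℂ))^m * Sigma2 (⇑(D3^[m] f)) e z₁ (z₂ + m)) := by rw [ih]
      _ = (-(e:ℂ))^m * ((z₂ + m) * Sigma2 (⇑(D3^[m] f)) e z₁ (z₂ + m)) := by ring
      _ = (-(e:ℂ))^m * ((-(e:ℂ)) * Sigma2 (⇑(LineDeriv.lineDerivOpCLM ℝ (SchwartzMap (Fin 4 → ℝ) ℂ) (![0,0,0,1] : Fin 4 → ℝ)
            (D3^[m] f))) e z₁ (z₂ + m + 1)) := by rw [hstep]
      _ = (-(e:ℂ))^(m+1) * Sigma2 (⇑(D3^[m+1] f)) e z₁ (z₂ + (m+1 : ℕ)) := by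
          rw [Function.iterate_succ_apply' D3 m f]
          have : z₂ + ((m+1 : ℕ) : ℂ) = z₂ + m + 1 := by push_cast; ring
          rw [this, D3]
          ring

lemma unif_bound (f : SchwartzMap (Fin 4 → ℝ) ℂ) {e : ℝ} (he : |e| = 1) {σ₁ σ₂ : ℝ}
    (h₁ : 0 < σ₁) (h₂ : 0 < σ₂) :
    ∃ B, 0 ≤ B ∧ ∀ z₁ z₂ : ℂ, z₁.re = σ₁ → z₂.re = σ₂ → ‖Sigma2 (⇑f) e z₁ z₂‖ ≤ B := by
  set k : ℕ := ⌊max σ₁ σ₂⌋₊ + 1 with hkdef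
  have hmax : max σ₁ σ₂ < k := by
    rw [hkdef]; push_cast; exact Nat.lt_floor_add_one _
  have hk₁ : σ₁ < k := lt_of_le_of_lt (le_max_left _ _) hmax
  have hk₂ : σ₂ < k := lt_of_le_of_lt (le_max_right _ _) hmax
  obtain ⟨C, hC0, hC⟩ := decay he f k
  set g : ℝ × ℝ → ℝ := fun p => (C * (((1+|p.1|)^k)⁻¹ * p.1 ^ (σ₁-1))) *
    (((1+|p.2|)^k)⁻¹ * p.2 ^ (σ₂-1)) with hg
  have hmaj : IntegrableOn g (Ioi (0:ℝ) ×ˢ Ioi (0:ℝ)) := by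
    rw [IntegrableOn, measure_eq]
    exact ((Kint h₁ hk₁).const_mul C).mul_prod (Kint h₂ hk₂)
  refine ⟨∫ p in Ioi (0:ℝ) ×ˢ Ioi (0:ℝ), g p, ?_, ?_⟩
  · apply setIntegral_nonneg (measurableSet_Ioi.prod measurableSet_Ioi)
    rintro ⟨p1, p2⟩ ⟨hp1, hp2⟩
    have h1 : (0:ℝ) < p1 := hp1
    have h2 : (0:ℝ) < p2 := hp2
    have := Real.rpow_nonneg h1.le (σ₁-1)
    have := Real.rpow_nonneg h2.le (σ₂-1)
    positivity
  · intro z₁ z₂ hz₁ hz₂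
    rw [Sigma2]
    apply norm_integral_le_of_norm_le hmaj
    filter_upwards [ae_restrict_mem (measurableSet_Ioi.prod measurableSet_Ioi)] with p hp
    have hp1 : (0:ℝ) < p.1 := hp.1
    have hp2 : (0:ℝ) < p.2 := hp.2
    rw [norm_mul, norm_mul, norm_ofReal_cpow hp1, norm_ofReal_cpow hp2]
    simp only [Complex.sub_re, Complex.one_re, hz₁, hz₂]
    calc ‖f ![0,0,p.1,e*p.2]‖ * p.1 ^ (σ₁-1) * p.2 ^ (σ₂-1)
        ≤ (C * ((1+|p.1|)^k)⁻¹ * ((1+|p.2|)^k)⁻¹) * p.1 ^ (σ₁-1) * p.2 ^ (σ₂-1) := by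
          exact mul_le_mul_of_nonneg_right (mul_le_mul_of_nonneg_right (hC p.1 p.2)
            (Real.rpow_nonneg hp1.le _)) (Real.rpow_nonneg hp2.le _)
      _ = g p := by rw [hg]; ring

lemma factor_lb {σ : ℝ} (hσ : 0 < σ) (τ : ℝ) (j : ℕ) :
    σ/(1+σ) * (1+|τ|) ≤ ‖(σ:ℂ) + τ*Complex.I + j‖ := by
  have hre : ((σ:ℂ) + τ*Complex.I + j).re = σ + j := by simp
  have him : ((σ:ℂ) + τ*Complex.I + j).im = τ := by simp
  rcases le_total (|τ|) σ with h | h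
  · have h1 : σ/(1+σ) * (1+|τ|) ≤ σ := by
      rw [div_mul_eq_mul_div, div_le_iff₀ (by positivity)]
      nlinarith [abs_nonneg τ]
    refine h1.trans ?_
    calc σ ≤ σ + j := le_add_of_nonneg_right (Nat.cast_nonneg j)
      _ = ((σ:ℂ) + τ*Complex.I + j).re := hre.symm
      _ ≤ ‖(σ:ℂ) + τ*Complex.I + j‖ := by
          exact Complex.re_le_norm _
  · have h1 : σ/(1+σ) * (1+|τ|) ≤ |τ| := by
      rw [div_mul_eq_mul_div, div_le_iff₀ (by positivity)]
      nlinarith [abs_nonneg τ]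
    refine h1.trans ?_
    calc |τ| = |((σ:ℂ) + τ*Complex.I + j).im| := by rw [him]
      _ ≤ ‖(σ:ℂ) + τ*Complex.I + j‖ := by
          exact Complex.abs_im_le_norm _

lemma prod_lb {σ : ℝ} (hσ : 0 < σ) (τ : ℝ) (n : ℕ) :
    (σ/(1+σ) * (1+|τ|))^n ≤ ‖∏ j ∈ Finset.range n, ((σ:ℂ) + τ*Complex.I + j)‖ := by
  have hconst : (σ/(1+σ) * (1+|τ|))^n = ∏ _j ∈ Finset.range n, (σ/(1+σ) * (1+|τ|)) := by
    rw [Finset.prod_const, Finset.card_range]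
  rw [hconst, norm_prod]
  exact Finset.prod_le_prod (fun j _ => by positivity) (fun j _ => factor_lb hσ τ j)

lemma decay_bound (f : SchwartzMap (Fin 4 → ℝ) ℂ) {e : ℝ} (he : |e| = 1)
    {σ₁ σ₂ A₁ A₂ : ℝ} (h₁ : 0 < σ₁) (h₂ : 0 < σ₂) (hA₁ : 0 < A₁) (hA₂ : 0 < A₂) :
    ∃ C : ℝ, ∀ t₁ t₂ : ℝ,
      ‖Sigma2 (⇑f) e ((σ₁:ℂ) + t₁*Complex.I) ((σ₂:ℂ) + t₂*Complex.I)‖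
        ≤ C * (1+|t₁|)^(-A₁) * (1+|t₂|)^(-A₂) := by
  set n : ℕ := ⌈A₁⌉₊ with hn
  set m : ℕ := ⌈A₂⌉₊ with hm
  set g : SchwartzMap (Fin 4 → ℝ) ℂ := D3^[m] (D2^[n] f) with hgdef
  have hσ₁n : 0 < σ₁ + n := by positivity
  have hσ₂m : 0 < σ₂ + m := by positivity
  obtain ⟨B, hB0, hB⟩ := unif_bound g he hσ₁n hσ₂m
  set c₁ : ℝ := σ₁/(1+σ₁) with hc₁def
  set c₂ : ℝ := σ₂/(1+σ₂) with hc₂def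
  have hc₁ : 0 < c₁ := by positivity
  have hc₂ : 0 < c₂ := by positivity
  refine ⟨B / (c₁^n * c₂^m), fun t₁ t₂ => ?_⟩
  set z₁ : ℂ := (σ₁:ℂ) + t₁*Complex.I with hz₁def
  set z₂ : ℂ := (σ₂:ℂ) + t₂*Complex.I with hz₂def
  have hz₁re : z₁.re = σ₁ := by simp [hz₁def]
  have hz₂re : z₂.re = σ₂ := by simp [hz₂def]
  have h₁' : 0 < z₁.re := by rw [hz₁re]; exact h₁
  have h₂' : 0 < z₂.re := by rw [hz₂re]; exact h₂
  have h₁n : 0 < (z₁ + n).re := by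
    rw [Complex.add_re, Complex.natCast_re, hz₁re]; positivity
  have hid1 := iter_t n f he h₁' h₂'
  have hid2 := iter_u m (D2^[n] f) he h₁n h₂'
  set P₁ : ℂ := ∏ j ∈ Finset.range n, (z₁ + j) with hP₁def
  set P₂ : ℂ := ∏ j ∈ Finset.range m, (z₂ + j) with hP₂def
  have hcomb : P₂ * (P₁ * Sigma2 (⇑f) e z₁ z₂)
      = (-1:ℂ)^n * ((-(e:ℂ))^m * Sigma2 (⇑g) e (z₁ + n) (z₂ + m)) := by
    rw [hid1]
    calc P₂ * ((-1:ℂ)^n * Sigma2 (⇑(D2^[n] f)) e (z₁ + n) z₂)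
        = (-1:ℂ)^n * (P₂ * Sigma2 (⇑(D2^[n] f)) e (z₁ + n) z₂) := by ring
      _ = (-1:ℂ)^n * ((-(e:ℂ))^m * Sigma2 (⇑g) e (z₁ + n) (z₂ + m)) := by rw [hid2]
  have hnorm : ‖P₁‖ * ‖P₂‖ * ‖Sigma2 (⇑f) e z₁ z₂‖ ≤ B := by
    have hre1 : (z₁ + n).re = σ₁ + n := by
      rw [Complex.add_re, Complex.natCast_re, hz₁re]
    have hre2 : (z₂ + m).re = σ₂ + m := by
      rw [Complex.add_re, Complex.natCast_re, hz₂re]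
    have hBapp := hB (z₁ + n) (z₂ + m) hre1 hre2
    calc ‖P₁‖ * ‖P₂‖ * ‖Sigma2 (⇑f) e z₁ z₂‖
        = ‖P₂ * (P₁ * Sigma2 (⇑f) e z₁ z₂)‖ := by rw [norm_mul, norm_mul]; ring
      _ = ‖(-1:ℂ)^n * ((-(e:ℂ))^m * Sigma2 (⇑g) e (z₁ + n) (z₂ + m))‖ := by rw [hcomb]
      _ = ‖Sigma2 (⇑g) e (z₁ + n) (z₂ + m)‖ := by
          rw [norm_mul, norm_mul, norm_pow, norm_pow, norm_neg, norm_neg, norm_one,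
            one_pow, Complex.norm_real, Real.norm_eq_abs, he, one_pow, one_mul, one_mul]
      _ ≤ B := hBapp
  have hP₁lb : (c₁ * (1+|t₁|))^n ≤ ‖P₁‖ := prod_lb h₁ t₁ n
  have hP₂lb : (c₂ * (1+|t₂|))^m ≤ ‖P₂‖ := prod_lb h₂ t₂ m
  set N₁ : ℝ := 1 + |t₁| with hN₁def
  set N₂ : ℝ := 1 + |t₂| with hN₂def
  have hN₁ : (1:ℝ) ≤ N₁ := by rw [hN₁def]; linarith [abs_nonneg t₁]
  have hN₂ : (1:ℝ) ≤ N₂ := by rw [hN₂def]; linarith [abs_nonneg t₂]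
  have hN₁0 : (0:ℝ) < N₁ := lt_of_lt_of_le one_pos hN₁
  have hN₂0 : (0:ℝ) < N₂ := lt_of_lt_of_le one_pos hN₂
  have hr₁ : N₁ ^ A₁ ≤ N₁ ^ (n:ℕ) := by
    rw [← Real.rpow_natCast N₁ n]
    exact Real.rpow_le_rpow_of_exponent_le hN₁ (Nat.le_ceil A₁)
  have hr₂ : N₂ ^ A₂ ≤ N₂ ^ (m:ℕ) := by
    rw [← Real.rpow_natCast N₂ m]
    exact Real.rpow_le_rpow_of_exponent_le hN₂ (Nat.le_ceil A₂)
  set S : ℝ := ‖Sigma2 (⇑f) e z₁ z₂‖ with hSdef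
  have hS0 : 0 ≤ S := norm_nonneg _
  have hchain : S * (c₁^n * N₁ ^ A₁) * (c₂^m * N₂ ^ A₂) ≤ B := by
    calc S * (c₁^n * N₁ ^ A₁) * (c₂^m * N₂ ^ A₂)
        ≤ S * (c₁^n * N₁ ^ (n:ℕ)) * (c₂^m * N₂ ^ (m:ℕ)) := by
          have hp₁ : (0:ℝ) < N₁ ^ A₁ := Real.rpow_pos_of_pos hN₁0 _
          have hp₂ : (0:ℝ) < N₂ ^ A₂ := Real.rpow_pos_of_pos hN₂0 _
          gcongr
      _ = S * (c₁ * N₁)^n * (c₂ * N₂)^m := by rw [mul_pow, mul_pow]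
      _ ≤ S * ‖P₁‖ * ‖P₂‖ := by
          have := mul_pos hc₁ hN₁0
          have := mul_pos hc₂ hN₂0
          gcongr
      _ = ‖P₁‖ * ‖P₂‖ * S := by ring
      _ ≤ B := hnorm
  have hD : (0:ℝ) < c₁^n * N₁ ^ A₁ * (c₂^m * N₂ ^ A₂) := by
    have hp₁ : (0:ℝ) < N₁ ^ A₁ := Real.rpow_pos_of_pos hN₁0 _
    have hp₂ : (0:ℝ) < N₂ ^ A₂ := Real.rpow_pos_of_pos hN₂0 _
    positivity
  have hrw : B / (c₁^n * c₂^m) * N₁ ^ (-A₁) * N₂ ^ (-A₂)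
      = B / (c₁^n * N₁ ^ A₁ * (c₂^m * N₂ ^ A₂)) := by
    rw [Real.rpow_neg hN₁0.le, Real.rpow_neg hN₂0.le]
    have hp₁ : (0:ℝ) < N₁ ^ A₁ := Real.rpow_pos_of_pos hN₁0 _
    have hp₂ : (0:ℝ) < N₂ ^ A₂ := Real.rpow_pos_of_pos hN₂0 _
    rw [div_eq_mul_inv, div_eq_mul_inv, mul_inv, mul_inv, mul_inv]
    ring
  rw [hrw, le_div_iff₀ hD]
  calc S * (c₁^n * N₁ ^ A₁ * (c₂^m * N₂ ^ A₂))
      = S * (c₁^n * N₁ ^ A₁) * (c₂^m * N₂ ^ A₂) := by ring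
    _ ≤ B := hchain

end Sigma2Aux

/-- Properties of the double Mellin transform `Σ^ε(f,z₁,z₂)` for a Schwartz function `f`:
(i) absolute convergence and separate holomorphy in `{Re z₁ > 0, Re z₂ > 0}`;
(ii) rapid decay in vertical strips;
(iii) the dilation law `Σ^ε(f^t, z₁, z₂) = t^{−z₁−z₂} Σ^ε(f, z₁, z₂)` for `f^t(x) = f(tx)`. -/
theorem sigma2_properties (f : SchwartzMap (Fin 4 → ℝ) ℂ) (e : ℝ) (he : e = 1 ∨ e = -1) :
    (∀ z₁ z₂ : ℂ, 0 < z₁.re → 0 < z₂.re →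
      IntegrableOn (fun p : ℝ × ℝ =>
          f ![0, 0, p.1, e * p.2] * (p.1 : ℂ) ^ (z₁ - 1) * (p.2 : ℂ) ^ (z₂ - 1))
        (Set.Ioi (0 : ℝ) ×ˢ Set.Ioi (0 : ℝ)) ∧
      DifferentiableAt ℂ (fun z => Sigma2 (⇑f) e z z₂) z₁ ∧
      DifferentiableAt ℂ (fun z => Sigma2 (⇑f) e z₁ z) z₂) ∧
    (∀ σ₁ σ₂ A₁ A₂ : ℝ, 0 < σ₁ → 0 < σ₂ → 0 < A₁ → 0 < A₂ → ∃ C : ℝ, ∀ t₁ t₂ : ℝ,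
      ‖Sigma2 (⇑f) e ((σ₁ : ℂ) + t₁ * Complex.I) ((σ₂ : ℂ) + t₂ * Complex.I)‖
        ≤ C * (1 + |t₁|) ^ (-A₁) * (1 + |t₂|) ^ (-A₂)) ∧
    (∀ t : ℝ, 0 < t → ∀ g : SchwartzMap (Fin 4 → ℝ) ℂ, (∀ x, g x = f (t • x)) →
      ∀ z₁ z₂ : ℂ, 0 < z₁.re → 0 < z₂.re →
        Sigma2 (⇑g) e z₁ z₂ = (t : ℂ) ^ (-z₁ - z₂) * Sigma2 (⇑f) e z₁ z₂) := by
  have he' : |e| = 1 := by rcases he with h | h <;> simp [h]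
  refine ⟨fun z₁ z₂ h₁ h₂ => ⟨Sigma2Aux.key_int f he' h₁ h₂,
    Sigma2Aux.diff1 f he' h₁ h₂, Sigma2Aux.diff2 f he' h₁ h₂⟩, ?_, ?_⟩
  · intro σ₁ σ₂ A₁ A₂ h₁ h₂ hA₁ hA₂
    exact Sigma2Aux.decay_bound f he' h₁ h₂ hA₁ hA₂
  · intro t ht g hg z₁ z₂ h₁ h₂
    exact Sigma2Aux.dilation f g he' ht hg h₁ h₂
end
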